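/- arXiv:1310.5202 — 6 statements merged into one kernel-verified Lean document; each statement's English description precedes it below -/
import Mathlib

section
/- Let S be a finite set and let 𝒜 and ℬ be nondegenerate hierarchies over S. The ordered pair (𝒜,ℬ) is an NNI edge (i.e., ℬ is the result of an NNI move on 𝒜 at some grandchild of 𝒜) if and only if there exists one and only one ordered triple (A,B,C) of clusters common to 𝒜 and ℬ such that 𝒜 \ ℬ = {A ∪ B} and ℬ \ 𝒜 = {B ∪ C}. -/
open scoped Classical

namespace TreeDist

variable {α : Type*} [DecidableEq α]

/-- Two finite sets are compatible if they are disjoint or nested. -/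
def Compatible (A B : Finset α) : Prop :=
  A ∩ B = ∅ ∨ A ⊆ B ∨ B ⊆ A

/-- A hierarchy over `S`: a laminar family of nonempty subsets of `S`
containing `S` and all singletons. -/
def IsHierarchy (S : Finset α) (F : Finset (Finset α)) : Prop :=
  (∀ A ∈ F, A ⊆ S ∧ A.Nonempty) ∧
  (∀ A ∈ F, ∀ B ∈ F, Compatible A B) ∧
  S ∈ F ∧ ∀ i ∈ S, ({i} : Finset α) ∈ F

/-- A nondegenerate (binary) hierarchy: a hierarchy with `2|S| - 1` clusters,
equivalently a maximal laminar family. -/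
def Nondeg (S : Finset α) (F : Finset (Finset α)) : Prop :=
  IsHierarchy S F ∧ F.card = 2 * S.card - 1

/-- `P` is the parent of `I` in the family `F`: the smallest cluster of `F`
strictly containing `I`. -/
def IsParent (F : Finset (Finset α)) (I P : Finset α) : Prop :=
  P ∈ F ∧ I ⊂ P ∧ ∀ Q ∈ F, I ⊂ Q → P ⊆ Q

/-- `G` is the result of an NNI move on `F` at some grandchild `C`:
`G = (F \ {parent C}) ∪ {grandparent C \ C}`. -/
def IsNNIMove (F G : Finset (Finset α)) : Prop :=
  ∃ C P GP, C ∈ F ∧ IsParent F C P ∧ IsParent F P GP ∧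
    G = insert (GP \ C) (F.erase P)

/-- Restriction of a family of sets to `K`: `{A ∩ K : A ∈ F, A ∩ K ≠ ∅}`. -/
noncomputable def restrictFam (F : Finset (Finset α)) (K : Finset α) : Finset (Finset α) :=
  (F.image (· ∩ K)).filter fun A => A.Nonempty

/-- The cardinality of the smallest common ancestor of `i` and `j` in `F`, i.e. the
minimum cardinality of a cluster of `F` containing both `i` and `j`. -/
noncomputable def caCard (F : Finset (Finset α)) (i j : α) : ℕ :=
  sInf {n | ∃ A ∈ F, i ∈ A ∧ j ∈ A ∧ A.card = n}

/-- Ultrametric representation `U(F)_{ij} = |ca(i,j)| - 1`. -/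
noncomputable def Umat (F : Finset (Finset α)) (i j : α) : ℤ :=
  (caCard F i j : ℤ) - 1

/-- Cluster-cardinality distance `d_CC = (1/2) Σ_{i,j ∈ S} |U(F)_{ij} - U(G)_{ij}|`. -/
noncomputable def dCC (S : Finset α) (F G : Finset (Finset α)) : ℚ :=
  (1 / 2) * ∑ i ∈ S, ∑ j ∈ S, |((Umat F i j : ℚ)) - ((Umat G i j : ℚ))|

/-- Robinson–Foulds distance: half the size of the symmetric difference of cluster sets. -/
noncomputable def dRF (F G : Finset (Finset α)) : ℚ :=
  (((F \ G) ∪ (G \ F)).card : ℚ) / 2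

/-- Crossing dissimilarity: the number of incompatible pairs of clusters. -/
noncomputable def dCM (F G : Finset (Finset α)) : ℕ :=
  ((F ×ˢ G).filter fun p => ¬ Compatible p.1 p.2).card

/-- Depth of a cluster: the number of its strict ancestors in `F`. -/
noncomputable def depth (F : Finset (Finset α)) (I : Finset α) : ℕ :=
  (F.filter fun J => I ⊂ J).card

/-- The children of `I` in `F`: the clusters of `F` whose parent is `I`. -/
noncomputable def children (F : Finset (Finset α)) (I : Finset α) : Finset (Finset α) :=
  F.filter fun C => IsParent F C I

/-- `η_{F,G}(I,J)`: the number of members of `(children I)|_J` incompatible with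
the family `(children J)|_I`. -/
noncomputable def eta (F G : Finset (Finset α)) (I J : Finset α) : ℕ :=
  ((restrictFam (children F I) J).filter
    fun A => ∃ B ∈ restrictFam (children G J) I, ¬ Compatible A B).card

/-- `θ(x) = (x² + x)/2`. -/
def theta (x : ℕ) : ℚ := ((x : ℚ) ^ 2 + x) / 2

/-- Closed-form NNI navigation distance `d_Nav(F,G) = Σ_{I∈F, J∈G} θ(η_{F,G}(I,J))`. -/
noncomputable def dNav (F G : Finset (Finset α)) : ℚ :=
  ∑ I ∈ F, ∑ J ∈ G, theta (eta F G I J)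


section Lemmas
variable {α : Type*} [DecidableEq α] {S : Finset α} {F G : Finset (Finset α)}

lemma compat_symm {A B : Finset α} (h : Compatible A B) : Compatible B A := by
  rcases h with h | h | h
  · left; rwa [Finset.inter_comm]
  · right; right; exact h
  · right; left; exact h

lemma compat_nested {A B : Finset α} (h : Compatible A B) (hne : (A ∩ B).Nonempty) :
    A ⊆ B ∨ B ⊆ A := by
  rcases h with h | h | h
  · exact absurd hne (by simp [h])
  · exact Or.inl h
  · exact Or.inr h

lemma laminar_card_bound_aux (n : ℕ) : ∀ S : Finset α, S.card ≤ n →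
    ∀ L : Finset (Finset α), (∀ A ∈ L, A ⊆ S ∧ A.Nonempty) →
    (∀ A ∈ L, ∀ B ∈ L, Compatible A B) → L.card ≤ 2 * S.card - 1 := by
  induction n with
  | zero =>
    intro S hS L hsub _
    have hSe : S = ∅ := Finset.card_eq_zero.mp (Nat.le_zero.mp hS)
    have : L = ∅ := by
      rw [Finset.eq_empty_iff_forall_notMem]
      intro A hA
      obtain ⟨h1, h2⟩ := hsub A hA
      rw [hSe] at h1
      exact absurd (Finset.subset_empty.mp h1) h2.ne_empty
    simp [this]
  | succ n ih =>
    intro S hS L hsub hlam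
    rcases L.eq_empty_or_nonempty with hL | hL
    · simp [hL]
    have hSne : S.Nonempty := by
      obtain ⟨A, hA⟩ := hL
      exact ((hsub A hA).2).mono (hsub A hA).1
    have hS1 : 1 ≤ S.card := Finset.card_pos.mpr hSne
    set L' := L.erase S with hL'def
    have hLsub : L ⊆ insert S L' := by
      intro x hx
      by_cases hxS : x = S
      · simp [hxS]
      · exact Finset.mem_insert_of_mem (Finset.mem_erase.mpr ⟨hxS, hx⟩)
    have hcard1 : L.card ≤ L'.card + 1 := by
      calc L.card ≤ (insert S L').card := Finset.card_le_card hLsub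
        _ ≤ L'.card + 1 := Finset.card_insert_le _ _
    rcases L'.eq_empty_or_nonempty with hL'e | hL'ne
    · rw [hL'e] at hcard1; simp at hcard1; omega
    obtain ⟨M, hM, hMmax⟩ := L'.exists_max_image Finset.card hL'ne
    have hML : M ∈ L := Finset.mem_of_mem_erase hM
    have hMS : M ⊆ S := (hsub M hML).1
    have hMne : M.Nonempty := (hsub M hML).2
    have hMneS : M ≠ S := (Finset.mem_erase.mp hM).1
    have hMss : M ⊂ S := hMS.ssubset_of_ne hMneS
    set L1 := L'.filter (fun A => A ⊆ M) with hL1def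
    set L2 := L'.filter (fun A => A ∩ M = ∅) with hL2def
    have hcover : L' ⊆ L1 ∪ L2 := by
      intro A hA
      have hAL : A ∈ L := Finset.mem_of_mem_erase hA
      rcases hlam A hAL M hML with h | h | h
      · exact Finset.mem_union_right _ (Finset.mem_filter.mpr ⟨hA, h⟩)
      · exact Finset.mem_union_left _ (Finset.mem_filter.mpr ⟨hA, h⟩)
      · have : A = M := (Finset.eq_of_subset_of_card_le h (hMmax A hA)).symm
        exact Finset.mem_union_left _ (Finset.mem_filter.mpr ⟨hA, this ▸ Finset.Subset.refl M⟩)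
    have hcard2 : L'.card ≤ L1.card + L2.card :=
      le_trans (Finset.card_le_card hcover) (Finset.card_union_le _ _)
    have hMcard : M.card < S.card := Finset.card_lt_card hMss
    have hb1 : L1.card ≤ 2 * M.card - 1 := by
      apply ih M (by omega) L1
      · intro A hA
        have := Finset.mem_filter.mp hA
        exact ⟨this.2, (hsub A (Finset.mem_of_mem_erase this.1)).2⟩
      · intro A hA B hB
        exact hlam A (Finset.mem_of_mem_erase (Finset.mem_filter.mp hA).1)
          B (Finset.mem_of_mem_erase (Finset.mem_filter.mp hB).1)
    have hsd : (S \ M).card = S.card - M.card := Finset.card_sdiff_of_subset hMS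
    have hM1 : 1 ≤ M.card := Finset.card_pos.mpr hMne
    have hb2 : L2.card ≤ 2 * (S \ M).card - 1 := by
      apply ih (S \ M) (by omega) L2
      · intro A hA
        have hff := Finset.mem_filter.mp hA
        have hAL : A ∈ L := Finset.mem_of_mem_erase hff.1
        refine ⟨?_, (hsub A hAL).2⟩
        intro x hx
        rw [Finset.mem_sdiff]
        refine ⟨(hsub A hAL).1 hx, fun hxM => ?_⟩
        have : x ∈ A ∩ M := Finset.mem_inter.mpr ⟨hx, hxM⟩
        rw [hff.2] at this
        exact absurd this (Finset.notMem_empty x)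
      · intro A hA B hB
        exact hlam A (Finset.mem_of_mem_erase (Finset.mem_filter.mp hA).1)
          B (Finset.mem_of_mem_erase (Finset.mem_filter.mp hB).1)
    omega

lemma mem_of_compatible (hF : Nondeg S F) {X : Finset α} (hXS : X ⊆ S) (hX : X.Nonempty)
    (hcomp : ∀ Q ∈ F, Compatible X Q) : X ∈ F := by
  by_contra h
  have hbound := laminar_card_bound_aux S.card S le_rfl (insert X F)
    (by
      intro A hA
      rcases Finset.mem_insert.mp hA with rfl | hA
      · exact ⟨hXS, hX⟩
      · exact hF.1.1 A hA)
    (by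
      intro A hA B hB
      rcases Finset.mem_insert.mp hA with hA' | hA' <;> rcases Finset.mem_insert.mp hB with hB' | hB'
      · rw [hA', hB']; exact Or.inr (Or.inl (Finset.Subset.refl _))
      · rw [hA']; exact hcomp B hB'
      · rw [hB']; exact compat_symm (hcomp A hA')
      · exact hF.1.2.1 A hA' B hB')
  rw [Finset.card_insert_of_notMem h, hF.2] at hbound
  have hS1 : 1 ≤ S.card := Finset.card_pos.mpr (hX.mono hXS)
  omega

lemma exists_parent (hF : IsHierarchy S F) {A : Finset α} (hA : A.Nonempty) (hAS : A ⊆ S)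
    (hAne : A ≠ S) : ∃ P, IsParent F A P := by
  have hT : S ∈ F.filter (fun Q => A ⊂ Q) :=
    Finset.mem_filter.mpr ⟨hF.2.2.1, hAS.ssubset_of_ne hAne⟩
  obtain ⟨P, hP, hPmin⟩ := (F.filter (fun Q => A ⊂ Q)).exists_min_image Finset.card ⟨S, hT⟩
  obtain ⟨hPF, hAP⟩ := Finset.mem_filter.mp hP
  refine ⟨P, hPF, hAP, fun Q hQ hAQ => ?_⟩
  have hQT : Q ∈ F.filter (fun Q => A ⊂ Q) := Finset.mem_filter.mpr ⟨hQ, hAQ⟩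
  have hcard := hPmin Q hQT
  have hint : (P ∩ Q).Nonempty := hA.mono (Finset.subset_inter hAP.subset hAQ.subset)
  rcases compat_nested (hF.2.1 P hPF Q hQ) hint with h | h
  · exact h
  · exact (Finset.eq_of_subset_of_card_le h hcard) ▸ Finset.Subset.refl _

lemma sibling_mem (hF : Nondeg S F) {C P : Finset α} (hC : C ∈ F) (hP : IsParent F C P) :
    P \ C ∈ F := by
  obtain ⟨hPF, hCP, hPmin⟩ := hP
  apply mem_of_compatible hF
  · exact Finset.Subset.trans (Finset.sdiff_subset) (hF.1.1 P hPF).1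
  · exact Finset.sdiff_nonempty.mpr (fun h => hCP.not_subset h)
  · intro Q hQ
    rcases hF.1.2.1 P hPF Q hQ with h | h | h
    · left
      exact Finset.subset_empty.mp (h ▸ Finset.inter_subset_inter_right Finset.sdiff_subset)
    · exact Or.inr (Or.inl (Finset.Subset.trans Finset.sdiff_subset h))
    · rcases hF.1.2.1 C hC Q hQ with h2 | h2 | h2
      · right; right
        intro x hx
        rw [Finset.mem_sdiff]
        refine ⟨h hx, fun hxC => ?_⟩
        have : x ∈ C ∩ Q := Finset.mem_inter.mpr ⟨hxC, hx⟩
        rw [h2] at this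
        exact absurd this (Finset.notMem_empty x)
      · by_cases hQC : Q = C
        · left
          subst hQC
          exact Finset.sdiff_inter_self Q P
        · have hCQ : C ⊂ Q := h2.ssubset_of_ne (fun h => hQC h.symm)
          have : Q = P := Finset.Subset.antisymm h (hPmin Q hQ hCQ)
          exact Or.inr (Or.inl (this ▸ Finset.sdiff_subset))
      · left
        ext x
        simp only [Finset.mem_inter, Finset.mem_sdiff, Finset.notMem_empty, iff_false]
        rintro ⟨⟨-, hxC⟩, hxQ⟩
        exact hxC (h2 hxQ)

end Lemmas
lemma not_mem_both {X Y : Finset α} (h : X ∩ Y = ∅) {x : α} (hx : x ∈ X) (hy : x ∈ Y) :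
    False :=
  Finset.eq_empty_iff_forall_notMem.mp h x (Finset.mem_inter.mpr ⟨hx, hy⟩)

theorem nni_edge_iff_unique_triplet (S : Finset α) (F G : Finset (Finset α))
    (hF : Nondeg S F) (hG : Nondeg S G) :
    IsNNIMove F G ↔
      ∃! t : Finset α × Finset α × Finset α,
        (t.1 ∈ F ∧ t.1 ∈ G) ∧ (t.2.1 ∈ F ∧ t.2.1 ∈ G) ∧ (t.2.2 ∈ F ∧ t.2.2 ∈ G) ∧
        F \ G = {t.1 ∪ t.2.1} ∧ G \ F = {t.2.1 ∪ t.2.2} := by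
  constructor
  · rintro ⟨C, P, GP, hC, hParC, hParP, hGeq⟩
    obtain ⟨hPF, hCP, hPmin⟩ := hParC
    obtain ⟨hGPF, hPGP, hGPmin⟩ := hParP
    have hCne : C.Nonempty := (hF.1.1 C hC).2
    have hBF : (P \ C) ∈ F := sibling_mem hF hC ⟨hPF, hCP, hPmin⟩
    have hDF : (GP \ P) ∈ F := sibling_mem hF hPF ⟨hGPF, hPGP, hGPmin⟩
    have hCsubP : C ⊆ P := hCP.subset
    have hPsubGP : P ⊆ GP := hPGP.subset
    have hPeq : C ∪ P \ C = P := by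
      ext x
      simp only [Finset.mem_union, Finset.mem_sdiff]
      constructor
      · rintro (h | ⟨h, -⟩)
        · exact hCsubP h
        · exact h
      · intro h
        by_cases hx : x ∈ C
        · exact Or.inl hx
        · exact Or.inr ⟨h, hx⟩
    have hNeq : P \ C ∪ GP \ P = GP \ C := by
      ext x
      simp only [Finset.mem_union, Finset.mem_sdiff]
      constructor
      · rintro (⟨h1, h2⟩ | ⟨h1, h2⟩)
        · exact ⟨hPsubGP h1, h2⟩
        · exact ⟨h1, fun hc => h2 (hCsubP hc)⟩
      · rintro ⟨h1, h2⟩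
        by_cases hx : x ∈ P
        · exact Or.inl ⟨hx, h2⟩
        · exact Or.inr ⟨h1, hx⟩
    have hPneN : P ≠ GP \ C := by
      intro h
      obtain ⟨x, hx⟩ := hCne
      have : x ∈ GP \ C := h ▸ hCsubP hx
      exact (Finset.mem_sdiff.mp this).2 hx
    have hPnotG : P ∉ G := by
      rw [hGeq]
      simp only [Finset.mem_insert, Finset.mem_erase]
      rintro (h | ⟨h, -⟩)
      · exact hPneN h
      · exact h rfl
    have hNnotF : GP \ C ∉ F := by
      intro hN
      have hint : ((GP \ C) ∩ P).Nonempty := by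
        obtain ⟨x, hx1, hx2⟩ := Finset.exists_of_ssubset hCP
        exact ⟨x, Finset.mem_inter.mpr ⟨Finset.mem_sdiff.mpr ⟨hPsubGP hx1, hx2⟩, hx1⟩⟩
      rcases compat_nested (hF.1.2.1 (GP \ C) hN P hPF) hint with h | h
      · have : GP ⊆ P := by
          intro x hx
          by_cases hxC : x ∈ C
          · exact hCsubP hxC
          · exact h (Finset.mem_sdiff.mpr ⟨hx, hxC⟩)
        exact hPGP.not_subset this
      · obtain ⟨x, hx⟩ := hCne
        exact (Finset.mem_sdiff.mp (h (hCsubP hx))).2 hx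
    have hNinG : GP \ C ∈ G := hGeq ▸ Finset.mem_insert_self _ _
    have hFG : F \ G = {P} := by
      ext x
      simp only [Finset.mem_sdiff, Finset.mem_singleton]
      constructor
      · rintro ⟨hxF, hxG⟩
        by_contra hxP
        exact hxG (hGeq ▸ Finset.mem_insert_of_mem (Finset.mem_erase.mpr ⟨hxP, hxF⟩))
      · rintro rfl
        exact ⟨hPF, hPnotG⟩
    have hGF : G \ F = {GP \ C} := by
      ext x
      simp only [Finset.mem_sdiff, Finset.mem_singleton]
      constructor
      · rintro ⟨hxG, hxF⟩
        rw [hGeq] at hxG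
        rcases Finset.mem_insert.mp hxG with h | h
        · exact h
        · exact absurd (Finset.mem_erase.mp h).2 hxF
      · rintro rfl
        exact ⟨hNinG, hNnotF⟩
    have hmemG : ∀ X ∈ F, X ≠ P → X ∈ G := fun X hX hne =>
      hGeq ▸ Finset.mem_insert_of_mem (Finset.mem_erase.mpr ⟨hne, hX⟩)
    have hCG : C ∈ G := hmemG C hC (Finset.ssubset_iff_subset_ne.mp hCP).2
    have hBneP : P \ C ≠ P := by
      intro h
      obtain ⟨x, hx⟩ := hCne
      have hxB : x ∈ P \ C := by rw [h]; exact hCsubP hx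
      exact (Finset.mem_sdiff.mp hxB).2 hx
    have hBG : P \ C ∈ G := hmemG _ hBF hBneP
    have hDneP : GP \ P ≠ P := by
      intro h
      obtain ⟨x, hx⟩ := hCne
      have hxD : x ∈ GP \ P := by rw [h]; exact hCsubP hx
      exact (Finset.mem_sdiff.mp hxD).2 (hCsubP hx)
    have hDG : GP \ P ∈ G := hmemG _ hDF hDneP
    refine ⟨(C, P \ C, GP \ P), ⟨⟨hC, hCG⟩, ⟨hBF, hBG⟩, ⟨hDF, hDG⟩,
      by rw [hPeq]; exact hFG, by rw [hNeq]; exact hGF⟩, ?_⟩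
    rintro ⟨A₂, B₂, C₂⟩ ⟨⟨hA2F, hA2G⟩, ⟨hB2F, hB2G⟩, ⟨hC2F, hC2G⟩, hFG2, hGF2⟩
    have hPe : A₂ ∪ B₂ = P := Finset.singleton_injective (hFG2.symm.trans hFG)
    have hNe : B₂ ∪ C₂ = GP \ C := Finset.singleton_injective (hGF2.symm.trans hGF)
    have hdAB : A₂ ∩ B₂ = ∅ := by
      rcases hF.1.2.1 A₂ hA2F B₂ hB2F with h | h | h
      · exact h
      · exfalso; apply hPnotG; rw [← hPe, Finset.union_eq_right.mpr h]; exact hB2G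
      · exfalso; apply hPnotG; rw [← hPe, Finset.union_eq_left.mpr h]; exact hA2G
    have hdBC : B₂ ∩ C₂ = ∅ := by
      rcases hF.1.2.1 B₂ hB2F C₂ hC2F with h | h | h
      · exact h
      · exfalso; apply hNnotF; rw [← hNe, Finset.union_eq_right.mpr h]; exact hC2F
      · exfalso; apply hNnotF; rw [← hNe, Finset.union_eq_left.mpr h]; exact hB2F
    have hdAC : A₂ ∩ C₂ = ∅ := by
      rcases hF.1.2.1 A₂ hA2F C₂ hC2F with h | h | h
      · exact h
      · exfalso
        have hPN : P ⊆ GP \ C := by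
          rw [← hPe, ← hNe]
          exact Finset.union_subset (h.trans Finset.subset_union_right) Finset.subset_union_left
        obtain ⟨x, hx⟩ := hCne
        exact (Finset.mem_sdiff.mp (hPN (hCsubP hx))).2 hx
      · exfalso
        have hNP : GP \ C ⊆ P := by
          rw [← hPe, ← hNe]
          exact Finset.union_subset Finset.subset_union_right (h.trans Finset.subset_union_left)
        apply hPGP.not_subset
        intro x hx
        by_cases hxC : x ∈ C
        · exact hCsubP hxC
        · exact hNP (Finset.mem_sdiff.mpr ⟨hx, hxC⟩)
    have hA2eq : A₂ = C := by
      ext x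
      constructor
      · intro hx
        have hxP : x ∈ P := hPe ▸ Finset.mem_union_left _ hx
        have hxnN : x ∉ GP \ C := by
          rw [← hNe]
          simp only [Finset.mem_union]
          rintro (h | h)
          · exact not_mem_both hdAB hx h
          · exact not_mem_both hdAC hx h
        by_contra hxC
        exact hxnN (Finset.mem_sdiff.mpr ⟨hPsubGP hxP, hxC⟩)
      · intro hx
        have hxP : x ∈ A₂ ∪ B₂ := by rw [hPe]; exact hCsubP hx
        rcases Finset.mem_union.mp hxP with h | h
        · exact h
        · exfalso
          have hxN : x ∈ GP \ C := by rw [← hNe]; exact Finset.mem_union_left _ h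
          exact (Finset.mem_sdiff.mp hxN).2 hx
    have hB2eq : B₂ = P \ C := by
      ext x
      constructor
      · intro hx
        have hxP : x ∈ P := hPe ▸ Finset.mem_union_right _ hx
        refine Finset.mem_sdiff.mpr ⟨hxP, fun hxC => ?_⟩
        have hxA : x ∈ A₂ := by rw [hA2eq]; exact hxC
        exact not_mem_both hdAB hxA hx
      · intro hx
        have hxP : x ∈ A₂ ∪ B₂ := by rw [hPe]; exact Finset.sdiff_subset hx
        rcases Finset.mem_union.mp hxP with h | h
        · exfalso
          have hxC : x ∈ C := by rw [← hA2eq]; exact h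
          exact (Finset.mem_sdiff.mp hx).2 hxC
        · exact h
    have hC2eq : C₂ = GP \ P := by
      ext x
      constructor
      · intro hx
        have hxN : x ∈ GP \ C := by rw [← hNe]; exact Finset.mem_union_right _ hx
        refine Finset.mem_sdiff.mpr ⟨(Finset.mem_sdiff.mp hxN).1, fun hxP => ?_⟩
        have hxP' : x ∈ A₂ ∪ B₂ := by rw [hPe]; exact hxP
        rcases Finset.mem_union.mp hxP' with h | h
        · exact not_mem_both hdAC h hx
        · exact not_mem_both hdBC h hx
      · intro hx
        obtain ⟨hxGP, hxnP⟩ := Finset.mem_sdiff.mp hx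
        have hxN : x ∈ B₂ ∪ C₂ := by
          rw [hNe]
          exact Finset.mem_sdiff.mpr ⟨hxGP, fun hc => hxnP (hCsubP hc)⟩
        rcases Finset.mem_union.mp hxN with h | h
        · exfalso
          apply hxnP
          rw [← hPe]
          exact Finset.mem_union_right _ h
        · exact h
    rw [Prod.mk.injEq, Prod.mk.injEq]
    exact ⟨hA2eq, hB2eq, hC2eq⟩
  · rintro ⟨⟨A, B, C'⟩, ⟨⟨hAF, hAG⟩, ⟨hBF, hBG⟩, ⟨hCF, hCG⟩, hFG, hGF⟩, -⟩
    simp only at hFG hGF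
    set P := A ∪ B with hPdef
    set N := B ∪ C' with hNdef
    have hPmem : P ∈ F ∧ P ∉ G := by
      have : P ∈ F \ G := by rw [hFG]; exact Finset.mem_singleton_self _
      exact Finset.mem_sdiff.mp this
    have hNmem : N ∈ G ∧ N ∉ F := by
      have : N ∈ G \ F := by rw [hGF]; exact Finset.mem_singleton_self _
      exact Finset.mem_sdiff.mp this
    have hAne : A.Nonempty := (hF.1.1 A hAF).2
    have hBne : B.Nonempty := (hF.1.1 B hBF).2
    have hCne : C'.Nonempty := (hF.1.1 C' hCF).2
    have hmemG : ∀ Q ∈ F, Q ≠ P → Q ∈ G := by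
      intro Q hQ hne
      by_contra h
      have : Q ∈ F \ G := Finset.mem_sdiff.mpr ⟨hQ, h⟩
      rw [hFG] at this
      exact hne (Finset.mem_singleton.mp this)
    have hmemF : ∀ Q ∈ G, Q ≠ N → Q ∈ F := by
      intro Q hQ hne
      by_contra h
      have : Q ∈ G \ F := Finset.mem_sdiff.mpr ⟨hQ, h⟩
      rw [hGF] at this
      exact hne (Finset.mem_singleton.mp this)
    have hAsubP : A ⊆ P := by rw [hPdef]; exact Finset.subset_union_left
    have hBsubP : B ⊆ P := by rw [hPdef]; exact Finset.subset_union_right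
    have hBsubN : B ⊆ N := by rw [hNdef]; exact Finset.subset_union_left
    have hCsubN : C' ⊆ N := by rw [hNdef]; exact Finset.subset_union_right
    have hNS : N ⊆ S := (hG.1.1 N hNmem.1).1
    have hNne : N.Nonempty := (hG.1.1 N hNmem.1).2
    have hdAB : A ∩ B = ∅ := by
      rcases hF.1.2.1 A hAF B hBF with h | h | h
      · exact h
      · exfalso; apply hPmem.2; rw [hPdef, Finset.union_eq_right.mpr h]; exact hBG
      · exfalso; apply hPmem.2; rw [hPdef, Finset.union_eq_left.mpr h]; exact hAG
    have hdBC : B ∩ C' = ∅ := by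
      rcases hF.1.2.1 B hBF C' hCF with h | h | h
      · exact h
      · exfalso; apply hNmem.2; rw [hNdef, Finset.union_eq_right.mpr h]; exact hCF
      · exfalso; apply hNmem.2; rw [hNdef, Finset.union_eq_left.mpr h]; exact hBF
    have hnotnested : ¬(N ⊆ P ∨ P ⊆ N) := by
      intro h
      apply hNmem.2
      apply mem_of_compatible hF hNS hNne
      intro Q hQ
      by_cases hQP : Q = P
      · rw [hQP]
        rcases h with h | h
        · exact Or.inr (Or.inl h)
        · exact Or.inr (Or.inr h)
      · exact hG.1.2.1 N hNmem.1 Q (hmemG Q hQ hQP)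
    have hdAC : A ∩ C' = ∅ := by
      rcases hF.1.2.1 A hAF C' hCF with h | h | h
      · exact h
      · exfalso
        apply hnotnested
        right
        rw [hPdef, hNdef]
        exact Finset.union_subset (h.trans Finset.subset_union_right) Finset.subset_union_left
      · exfalso
        apply hnotnested
        left
        rw [hPdef, hNdef]
        exact Finset.union_subset Finset.subset_union_right (h.trans Finset.subset_union_left)
    have hAnotN : ∀ x ∈ A, x ∉ N := by
      intro x hx hxN
      rw [hNdef, Finset.mem_union] at hxN
      rcases hxN with h | h
      · exact not_mem_both hdAB hx h
      · exact not_mem_both hdAC hx h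
    have hCnotP : ∀ x ∈ C', x ∉ P := by
      intro x hx hxP
      rw [hPdef, Finset.mem_union] at hxP
      rcases hxP with h | h
      · exact not_mem_both hdAC h hx
      · exact not_mem_both hdBC h hx
    set GP := P ∪ N with hGPdef
    have hPS : P ⊆ S := (hF.1.1 P hPmem.1).1
    have hGPS : GP ⊆ S := Finset.union_subset hPS hNS
    have hGPne : GP.Nonempty := hNne.mono (by rw [hGPdef]; exact Finset.subset_union_right)
    have hGPmem : GP ∈ F := by
      apply mem_of_compatible hF hGPS hGPne
      intro Q hQ
      by_cases hQP : Q = P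
      · right; right; rw [hQP, hGPdef]; exact Finset.subset_union_left
      have hQG : Q ∈ G := hmemG Q hQ hQP
      have hcompN : Compatible N Q := hG.1.2.1 N hNmem.1 Q hQG
      rcases hF.1.2.1 Q hQ P hPmem.1 with h | h | h
      · rcases hcompN with h2 | h2 | h2
        · left
          rw [Finset.eq_empty_iff_forall_notMem]
          intro x hx
          obtain ⟨hx1, hx2⟩ := Finset.mem_inter.mp hx
          rw [hGPdef, Finset.mem_union] at hx1
          rcases hx1 with h3 | h3
          · exact not_mem_both h hx2 h3
          · exact not_mem_both h2 h3 hx2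
        · exfalso
          obtain ⟨x, hx⟩ := hBne
          exact not_mem_both h (h2 (hBsubN hx)) (hBsubP hx)
        · right; right; rw [hGPdef]; exact h2.trans Finset.subset_union_right
      · right; right; rw [hGPdef]; exact h.trans Finset.subset_union_left
      · rcases hcompN with h2 | h2 | h2
        · exfalso
          obtain ⟨x, hx⟩ := hBne
          exact not_mem_both h2 (hBsubN hx) (h (hBsubP hx))
        · right; left; rw [hGPdef]; exact Finset.union_subset h h2
        · exfalso
          obtain ⟨x, hx⟩ := hAne
          exact hAnotN x hx (h2 (h (hAsubP hx)))
    have hParA : IsParent F A P := by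
      refine ⟨hPmem.1, ?_, ?_⟩
      · refine Finset.ssubset_iff_subset_ne.mpr ⟨hAsubP, fun h => ?_⟩
        obtain ⟨x, hx⟩ := hBne
        have hxA : x ∈ A := by rw [h]; exact hBsubP hx
        exact not_mem_both hdAB hxA hx
      · intro Q hQ hAQ
        by_cases hQP : Q = P
        · rw [hQP]
        have hQG : Q ∈ G := hmemG Q hQ hQP
        have hint : (Q ∩ P).Nonempty := hAne.mono (Finset.subset_inter hAQ.subset hAsubP)
        rcases compat_nested (hF.1.2.1 Q hQ P hPmem.1) hint with h | h
        · exfalso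
          have hQN : (Q ∩ N).Nonempty := by
            obtain ⟨x, hx1, hx2⟩ := Finset.exists_of_ssubset hAQ
            have hxP : x ∈ P := h hx1
            have hxB : x ∈ B := by
              rw [hPdef, Finset.mem_union] at hxP
              rcases hxP with h3 | h3
              · exact absurd h3 hx2
              · exact h3
            exact ⟨x, Finset.mem_inter.mpr ⟨hx1, hBsubN hxB⟩⟩
          rcases compat_nested (hG.1.2.1 Q hQG N hNmem.1) hQN with h4 | h4
          · obtain ⟨x, hx⟩ := hAne
            exact hAnotN x hx (h4 (hAQ.subset hx))
          · obtain ⟨x, hx⟩ := hCne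
            exact hCnotP x hx (h (h4 (hCsubN hx)))
        · exact h
    have hParP : IsParent F P GP := by
      refine ⟨hGPmem, ?_, ?_⟩
      · refine Finset.ssubset_iff_subset_ne.mpr
          ⟨by rw [hGPdef]; exact Finset.subset_union_left, fun h => ?_⟩
        obtain ⟨x, hx⟩ := hCne
        have hxP : x ∈ P := by rw [h, hGPdef]; exact Finset.mem_union_right _ (hCsubN hx)
        exact hCnotP x hx hxP
      · intro Q hQ hPQ
        by_cases hQP : Q = P
        · exfalso
          rw [hQP] at hPQ
          exact (Finset.ssubset_iff_subset_ne.mp hPQ).2 rfl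
        have hQG : Q ∈ G := hmemG Q hQ hQP
        have hQN : (Q ∩ N).Nonempty :=
          hBne.mono (Finset.subset_inter (fun x hx => hPQ.subset (hBsubP hx)) hBsubN)
        rcases compat_nested (hG.1.2.1 Q hQG N hNmem.1) hQN with h | h
        · exfalso
          obtain ⟨x, hx⟩ := hAne
          exact hAnotN x hx (h (hPQ.subset (hAsubP hx)))
        · rw [hGPdef]; exact Finset.union_subset hPQ.subset h
    refine ⟨A, P, GP, hAF, hParA, hParP, ?_⟩
    have hGPA : GP \ A = N := by
      ext x
      rw [Finset.mem_sdiff]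
      constructor
      · rintro ⟨hx1, hx2⟩
        rw [hGPdef, Finset.mem_union] at hx1
        rcases hx1 with h | h
        · rw [hPdef, Finset.mem_union] at h
          rcases h with h | h
          · exact absurd h hx2
          · exact hBsubN h
        · exact h
      · intro hx
        exact ⟨by rw [hGPdef]; exact Finset.mem_union_right _ hx,
          fun hxA => hAnotN x hxA hx⟩
    rw [hGPA]
    ext x
    simp only [Finset.mem_insert, Finset.mem_erase]
    constructor
    · intro hx
      by_cases hxN : x = N
      · exact Or.inl hxN
      · exact Or.inr ⟨fun h => hPmem.2 (h ▸ hx), hmemF x hx hxN⟩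
    · rintro (h | ⟨h1, h2⟩)
      · rw [h]; exact hNmem.1
      · exact hmemG x h2 h1
end TreeDist
end

section
/- Let S be a finite set and K ⊆ S with |K| ≥ 2. Then the image of the set of nondegenerate hierarchies over S under the restriction map 𝒜 ↦ 𝒜|_K := {A∩K : A ∈ 𝒜, A∩K ≠ ∅} is exactly the set of nondegenerate hierarchies over K; in particular, the restriction of any nondegenerate hierarchy over S to K is a nondegenerate hierarchy over K, and every nondegenerate hierarchy over K arises as such a restriction. -/
open scoped Classical

namespace TreeDist

variable {α : Type*} [DecidableEq α]

lemma mem_restrictFam {F : Finset (Finset α)} {K A' : Finset α} :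
    A' ∈ restrictFam F K ↔ A'.Nonempty ∧ ∃ A ∈ F, A ∩ K = A' := by
  simp only [restrictFam, Finset.mem_filter, Finset.mem_image]
  tauto

lemma compatible_inter {A B K : Finset α} (h : Compatible A B) :
    Compatible (A ∩ K) (B ∩ K) := by
  rcases h with h | h | h
  · left
    apply Finset.eq_empty_of_forall_notMem
    intro x hx
    simp only [Finset.mem_inter] at hx
    have : x ∈ A ∩ B := Finset.mem_inter.mpr ⟨hx.1.1, hx.2.1⟩
    rw [h] at this; exact absurd this (Finset.notMem_empty x)
  · right; left; exact Finset.inter_subset_inter h le_rfl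
  · right; right; exact Finset.inter_subset_inter h le_rfl

/-- A binary hierarchy: every cluster of size ≥ 2 splits into two members. -/
def Binary (S : Finset α) (F : Finset (Finset α)) : Prop :=
  IsHierarchy S F ∧ ∀ A ∈ F, 2 ≤ A.card →
    ∃ B ∈ F, ∃ C ∈ F, B ∪ C = A ∧ B ∩ C = ∅

lemma hierarchy_filter {S B : Finset α} {F : Finset (Finset α)}
    (hH : IsHierarchy S F) (hB : B ∈ F) :
    IsHierarchy B (F.filter fun A => A ⊆ B) := by
  obtain ⟨h1, h2, h3, h4⟩ := hH
  refine ⟨?_, ?_, ?_, ?_⟩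
  · intro A hA
    rw [Finset.mem_filter] at hA
    exact ⟨hA.2, (h1 A hA.1).2⟩
  · intro A hA C hC
    rw [Finset.mem_filter] at hA hC
    exact h2 A hA.1 C hC.1
  · exact Finset.mem_filter.mpr ⟨hB, subset_rfl⟩
  · intro i hi
    exact Finset.mem_filter.mpr ⟨h4 i ((h1 B hB).1 hi), Finset.singleton_subset_iff.mpr hi⟩

lemma hierarchy_insert_sdiff {S B : Finset α} {F : Finset (Finset α)}
    (hH : IsHierarchy S F) (hBS : B ⊂ S) :
    IsHierarchy (S \ B) (insert (S \ B) (F.filter fun A => A ⊆ S \ B)) := by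
  obtain ⟨h1, h2, h3, h4⟩ := hH
  have hSBne : (S \ B).Nonempty := by
    obtain ⟨x, hxS, hxB⟩ := Finset.exists_of_ssubset hBS
    exact ⟨x, Finset.mem_sdiff.mpr ⟨hxS, hxB⟩⟩
  refine ⟨?_, ?_, ?_, ?_⟩
  · intro A hA
    rcases Finset.mem_insert.mp hA with rfl | hA
    · exact ⟨subset_rfl, hSBne⟩
    · rw [Finset.mem_filter] at hA
      exact ⟨hA.2, (h1 A hA.1).2⟩
  · intro A hA C hC
    rcases Finset.mem_insert.mp hA with rfl | hA <;>
      rcases Finset.mem_insert.mp hC with rfl | hC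
    · right; left; exact subset_rfl
    · rw [Finset.mem_filter] at hC
      right; right; exact hC.2
    · rw [Finset.mem_filter] at hA
      right; left; exact hA.2
    · rw [Finset.mem_filter] at hA hC
      exact h2 A hA.1 C hC.1
  · exact Finset.mem_insert_self _ _
  · intro i hi
    refine Finset.mem_insert.mpr (Or.inr (Finset.mem_filter.mpr ⟨h4 i ?_, ?_⟩))
    · exact (Finset.mem_sdiff.mp hi).1
    · exact Finset.singleton_subset_iff.mpr hi

/-- Decomposition count: if every member is `S`, inside `B`, or inside `S \ B`. -/
lemma decomp {S B : Finset α} {F : Finset (Finset α)}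
    (hH : IsHierarchy S F) (hB : B ∈ F) (hBS : B ⊂ S)
    (htri : ∀ A ∈ F, A = S ∨ A ⊆ B ∨ A ⊆ S \ B) :
    F.card = (F.filter fun A => A ⊆ B).card + (F.filter fun A => A ⊆ S \ B).card + 1 := by
  obtain ⟨h1, h2, h3, h4⟩ := hH
  have hBne : B.Nonempty := (h1 B hB).2
  have hFeq : F = insert S ((F.filter fun A => A ⊆ B) ∪ (F.filter fun A => A ⊆ S \ B)) := by
    ext A
    simp only [Finset.mem_insert, Finset.mem_union, Finset.mem_filter]
    constructor
    · intro hA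
      rcases htri A hA with h | h | h
      · exact Or.inl h
      · exact Or.inr (Or.inl ⟨hA, h⟩)
      · exact Or.inr (Or.inr ⟨hA, h⟩)
    · rintro (rfl | ⟨hA, _⟩ | ⟨hA, _⟩) <;> first | exact h3 | exact hA
  have hSnot : S ∉ (F.filter fun A => A ⊆ B) ∪ (F.filter fun A => A ⊆ S \ B) := by
    intro h
    rcases Finset.mem_union.mp h with h | h <;> rw [Finset.mem_filter] at h
    · exact hBS.ne (le_antisymm hBS.subset h.2)
    · obtain ⟨b, hb⟩ := hBne
      have hbS : b ∈ S := (h1 B hB).1 hb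
      have := h.2 hbS
      exact (Finset.mem_sdiff.mp this).2 hb
  have hdisj : Disjoint (F.filter fun A => A ⊆ B) (F.filter fun A => A ⊆ S \ B) := by
    rw [Finset.disjoint_left]
    intro A hA hA'
    rw [Finset.mem_filter] at hA hA'
    obtain ⟨a, ha⟩ := (h1 A hA.1).2
    have h1' := hA.2 ha
    have h2' := hA'.2 ha
    exact (Finset.mem_sdiff.mp h2').2 h1'
  have : F.card = ((F.filter fun A => A ⊆ B) ∪ (F.filter fun A => A ⊆ S \ B)).card + 1 := by
    conv_lhs => rw [hFeq]
    rw [Finset.card_insert_of_notMem hSnot]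
  rw [this, Finset.card_union_of_disjoint hdisj]

/-- small case: a hierarchy over a singleton is `{S}`. -/
lemma hierarchy_card_one {S : Finset α} {F : Finset (Finset α)}
    (hH : IsHierarchy S F) (h1 : S.card = 1) : F = {S} := by
  obtain ⟨s, rfl⟩ := Finset.card_eq_one.mp h1
  apply Finset.eq_singleton_iff_unique_mem.mpr
  refine ⟨hH.2.2.1, ?_⟩
  intro A hA
  obtain ⟨hsub, hne⟩ := hH.1 A hA
  obtain ⟨a, ha⟩ := hne
  have := hsub ha
  rw [Finset.mem_singleton] at this
  subst this
  apply le_antisymm hsub (Finset.singleton_subset_iff.mpr ha)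

/-- existence of a maximal proper member, with its trichotomy property. -/
lemma exists_max_proper {S : Finset α} {F : Finset (Finset α)}
    (hH : IsHierarchy S F) (h2 : 2 ≤ S.card) :
    ∃ B ∈ F, B ⊂ S ∧ ∀ A ∈ F, A = S ∨ A ⊆ B ∨ A ⊆ S \ B := by
  obtain ⟨h1, hc, h3, h4⟩ := hH
  have hPne : (F.filter fun A => A ⊂ S).Nonempty := by
    obtain ⟨i, hi⟩ := Finset.card_pos.mp (show 0 < S.card by omega)
    refine ⟨{i}, Finset.mem_filter.mpr ⟨h4 i hi, ?_⟩⟩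
    constructor
    · exact Finset.singleton_subset_iff.mpr hi
    · intro h
      have hcs := Finset.card_le_card h
      simp only [Finset.card_singleton] at hcs
      omega
  obtain ⟨B, hBmem, hBmax⟩ := Finset.exists_max_image _ Finset.card hPne
  rw [Finset.mem_filter] at hBmem
  obtain ⟨hBF, hBS⟩ := hBmem
  refine ⟨B, hBF, hBS, ?_⟩
  intro A hA
  by_cases hAS : A = S
  · exact Or.inl hAS
  have hAps : A ⊂ S := lt_of_le_of_ne (h1 A hA).1 hAS
  rcases hc A hA B hBF with h | h | h
  · right; right
    intro x hx
    rw [Finset.mem_sdiff]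
    refine ⟨hAps.subset hx, fun hxB => ?_⟩
    have : x ∈ A ∩ B := Finset.mem_inter.mpr ⟨hx, hxB⟩
    rw [h] at this
    exact absurd this (Finset.notMem_empty x)
  · exact Or.inr (Or.inl h)
  · have : A.card ≤ B.card := hBmax A (Finset.mem_filter.mpr ⟨hA, hAps⟩)
    have : A = B := (Finset.eq_of_subset_of_card_le h this).symm
    exact Or.inr (Or.inl (le_of_eq this))

/-- Lemma U: any hierarchy has at most `2|S| - 1` clusters. -/
lemma hierarchy_card_le : ∀ n (S : Finset α) (F : Finset (Finset α)),
    S.card ≤ n → IsHierarchy S F → F.card ≤ 2 * S.card - 1 := by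
  intro n
  induction n with
  | zero =>
    intro S F hS hH
    obtain ⟨s, hs⟩ := (hH.1 S hH.2.2.1).2
    have := Finset.card_pos.mpr ⟨s, hs⟩
    omega
  | succ n ih =>
    intro S F hS hH
    by_cases h1 : S.card ≤ 1
    · have hS1 : S.card = 1 := by
        obtain ⟨s, hs⟩ := (hH.1 S hH.2.2.1).2
        have := Finset.card_pos.mpr ⟨s, hs⟩
        omega
      rw [hierarchy_card_one hH hS1, hS1]
      simp
    push_neg at h1
    obtain ⟨B, hBF, hBS, htri⟩ := exists_max_proper hH (by omega)
    have hBsub : B ⊆ S := hBS.subset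
    have hBne : B.Nonempty := (hH.1 B hBF).2
    have hBcard : 1 ≤ B.card := Finset.card_pos.mpr hBne
    have hBlt : B.card < S.card := Finset.card_lt_card hBS
    have hsd : (S \ B).card = S.card - B.card := Finset.card_sdiff_of_subset hBsub
    have hcd := decomp hH hBF hBS htri
    have hcb : (F.filter fun A => A ⊆ B).card ≤ 2 * B.card - 1 :=
      ih B _ (by omega) (hierarchy_filter hH hBF)
    have hcd2 : (F.filter fun A => A ⊆ S \ B).card ≤ 2 * (S \ B).card - 1 := by
      have h' := ih (S \ B) _ (by omega) (hierarchy_insert_sdiff hH hBS)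
      calc (F.filter fun A => A ⊆ S \ B).card
          ≤ (insert (S \ B) (F.filter fun A => A ⊆ S \ B)).card :=
            Finset.card_le_card (Finset.subset_insert _ _)
        _ ≤ 2 * (S \ B).card - 1 := h'
    omega

/-- L1: a nondegenerate hierarchy is binary. -/
lemma nondeg_binary : ∀ n (S : Finset α) (F : Finset (Finset α)),
    S.card ≤ n → Nondeg S F → Binary S F := by
  intro n
  induction n with
  | zero =>
    intro S F hS hND
    obtain ⟨s, hs⟩ := (hND.1.1 S hND.1.2.2.1).2
    have := Finset.card_pos.mpr ⟨s, hs⟩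
    omega
  | succ n ih =>
    intro S F hS hND
    obtain ⟨hH, hcard⟩ := hND
    by_cases h1 : S.card ≤ 1
    · refine ⟨hH, ?_⟩
      intro A hA h2
      have := Finset.card_le_card (hH.1 A hA).1
      omega
    push_neg at h1
    obtain ⟨B, hBF, hBS, htri⟩ := exists_max_proper hH (by omega)
    have hBsub : B ⊆ S := hBS.subset
    have hBne : B.Nonempty := (hH.1 B hBF).2
    have hBcard : 1 ≤ B.card := Finset.card_pos.mpr hBne
    have hBlt : B.card < S.card := Finset.card_lt_card hBS
    have hsd : (S \ B).card = S.card - B.card := Finset.card_sdiff_of_subset hBsub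
    have hsdpos : 1 ≤ (S \ B).card := by omega
    have hcd := decomp hH hBF hBS htri
    have hcb : (F.filter fun A => A ⊆ B).card ≤ 2 * B.card - 1 :=
      hierarchy_card_le B.card B _ le_rfl (hierarchy_filter hH hBF)
    have hins := hierarchy_insert_sdiff hH hBS
    have hcd2 : (insert (S \ B) (F.filter fun A => A ⊆ S \ B)).card ≤ 2 * (S \ B).card - 1 :=
      hierarchy_card_le (S \ B).card _ _ le_rfl hins
    have hcd2' : (F.filter fun A => A ⊆ S \ B).card ≤
        (insert (S \ B) (F.filter fun A => A ⊆ S \ B)).card :=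
      Finset.card_le_card (Finset.subset_insert _ _)
    -- forced equalities
    have heqB : (F.filter fun A => A ⊆ B).card = 2 * B.card - 1 := by omega
    have heqD : (F.filter fun A => A ⊆ S \ B).card = 2 * (S \ B).card - 1 := by omega
    -- S \ B must be a member
    have hSBmem : (S \ B) ∈ F.filter fun A => A ⊆ S \ B := by
      by_contra h
      have : (insert (S \ B) (F.filter fun A => A ⊆ S \ B)).card =
          (F.filter fun A => A ⊆ S \ B).card + 1 := Finset.card_insert_of_notMem h
      omega
    have hSBF : (S \ B) ∈ F := (Finset.mem_filter.mp hSBmem).1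
    have hinsEq : insert (S \ B) (F.filter fun A => A ⊆ S \ B) =
        F.filter fun A => A ⊆ S \ B := Finset.insert_eq_self.mpr hSBmem
    -- sub-hierarchies are nondegenerate
    have hNDB : Nondeg B (F.filter fun A => A ⊆ B) := ⟨hierarchy_filter hH hBF, heqB⟩
    have hNDD : Nondeg (S \ B) (F.filter fun A => A ⊆ S \ B) := by
      refine ⟨?_, heqD⟩
      rw [← hinsEq]
      exact hins
    have hBinB := ih B _ (by omega) hNDB
    have hBinD := ih (S \ B) _ (by omega) hNDD
    refine ⟨hH, ?_⟩
    intro A hA h2A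
    rcases htri A hA with hAS | h | h
    · refine ⟨B, hBF, S \ B, hSBF, ?_, Finset.inter_sdiff_self B S⟩
      rw [hAS]
      exact Finset.union_sdiff_of_subset hBsub
    · obtain ⟨B', hB', C', hC', hu, hi⟩ :=
        hBinB.2 A (Finset.mem_filter.mpr ⟨hA, h⟩) h2A
      exact ⟨B', (Finset.mem_filter.mp hB').1, C', (Finset.mem_filter.mp hC').1, hu, hi⟩
    · obtain ⟨B', hB', C', hC', hu, hi⟩ :=
        hBinD.2 A (Finset.mem_filter.mpr ⟨hA, h⟩) h2A
      exact ⟨B', (Finset.mem_filter.mp hB').1, C', (Finset.mem_filter.mp hC').1, hu, hi⟩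

/-- L2: a binary hierarchy has exactly `2|S| - 1` clusters. -/
lemma binary_card : ∀ n (S : Finset α) (F : Finset (Finset α)),
    S.card ≤ n → Binary S F → F.card = 2 * S.card - 1 := by
  intro n
  induction n with
  | zero =>
    intro S F hS hB
    obtain ⟨s, hs⟩ := (hB.1.1 S hB.1.2.2.1).2
    have := Finset.card_pos.mpr ⟨s, hs⟩
    omega
  | succ n ih =>
    intro S F hS hBin
    obtain ⟨hH, hsplit⟩ := hBin
    by_cases h1 : S.card ≤ 1
    · have hS1 : S.card = 1 := by
        obtain ⟨s, hs⟩ := (hH.1 S hH.2.2.1).2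
        have := Finset.card_pos.mpr ⟨s, hs⟩
        omega
      rw [hierarchy_card_one hH hS1, hS1]
      simp
    push_neg at h1
    obtain ⟨B, hBF, C, hCF, hu, hi⟩ := hsplit S hH.2.2.1 (by omega)
    have hBne : B.Nonempty := (hH.1 B hBF).2
    have hCne : C.Nonempty := (hH.1 C hCF).2
    have hBsub : B ⊆ S := (hH.1 B hBF).1
    have hCsub : C ⊆ S := (hH.1 C hCF).1
    have hCeq : C = S \ B := by
      ext x
      rw [Finset.mem_sdiff]
      constructor
      · intro hx
        refine ⟨hCsub hx, fun hxB => ?_⟩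
        have : x ∈ B ∩ C := Finset.mem_inter.mpr ⟨hxB, hx⟩
        rw [hi] at this
        exact absurd this (Finset.notMem_empty x)
      · rintro ⟨hxS, hxB⟩
        rw [← hu] at hxS
        rcases Finset.mem_union.mp hxS with h | h
        · exact absurd h hxB
        · exact h
    have hBS : B ⊂ S := by
      refine lt_of_le_of_ne hBsub fun h => ?_
      obtain ⟨c, hc⟩ := hCne
      have hcB : c ∈ B := by rw [h]; exact hCsub hc
      have : c ∈ B ∩ C := Finset.mem_inter.mpr ⟨hcB, hc⟩
      rw [hi] at this
      exact absurd this (Finset.notMem_empty c)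
    have htri : ∀ A ∈ F, A = S ∨ A ⊆ B ∨ A ⊆ S \ B := by
      intro A hA
      by_cases hAS : A = S
      · exact Or.inl hAS
      obtain ⟨hAsub, hAne⟩ := hH.1 A hA
      rcases hH.2.1 A hA B hBF with h | h | h
      · right; right
        intro x hx
        rw [Finset.mem_sdiff]
        refine ⟨hAsub hx, fun hxB => ?_⟩
        have : x ∈ A ∩ B := Finset.mem_inter.mpr ⟨hx, hxB⟩
        rw [h] at this
        exact absurd this (Finset.notMem_empty x)
      · exact Or.inr (Or.inl h)
      · -- B ⊆ A; compare with C
        rcases hH.2.1 A hA C hCF with h' | h' | h'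
        · right; left
          intro x hx
          have hxS : x ∈ S := hAsub hx
          rw [← hu] at hxS
          rcases Finset.mem_union.mp hxS with hB' | hC'
          · exact hB'
          · have : x ∈ A ∩ C := Finset.mem_inter.mpr ⟨hx, hC'⟩
            rw [h'] at this
            exact absurd this (Finset.notMem_empty x)
        · right; right
          rw [← hCeq]
          exact h'
        · exfalso
          apply hAS
          apply le_antisymm hAsub
          rw [← hu]
          exact Finset.union_subset h h'
    have hBcard : 1 ≤ B.card := Finset.card_pos.mpr hBne
    have hBlt : B.card < S.card := Finset.card_lt_card hBS
    have hsd : (S \ B).card = S.card - B.card := Finset.card_sdiff_of_subset hBsub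
    have hsdpos : 1 ≤ (S \ B).card := by
      rw [← hCeq]; exact Finset.card_pos.mpr hCne
    have hcd := decomp hH hBF hBS htri
    -- binary sub-hierarchies
    have hSBF : (S \ B) ∈ F := by rw [← hCeq]; exact hCF
    have hBinB : Binary B (F.filter fun A => A ⊆ B) := by
      refine ⟨hierarchy_filter hH hBF, ?_⟩
      intro A hA h2A
      rw [Finset.mem_filter] at hA
      obtain ⟨B', hB', C', hC', hu', hi'⟩ := hsplit A hA.1 h2A
      have hB'A : B' ⊆ A := by rw [← hu']; exact Finset.subset_union_left
      have hC'A : C' ⊆ A := by rw [← hu']; exact Finset.subset_union_right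
      exact ⟨B', Finset.mem_filter.mpr ⟨hB', hB'A.trans hA.2⟩,
        C', Finset.mem_filter.mpr ⟨hC', hC'A.trans hA.2⟩, hu', hi'⟩
    have hBinD : Binary (S \ B) (F.filter fun A => A ⊆ S \ B) := by
      constructor
      · have h' := hierarchy_insert_sdiff hH hBS
        have hmem : (S \ B) ∈ F.filter fun A => A ⊆ S \ B :=
          Finset.mem_filter.mpr ⟨hSBF, subset_rfl⟩
        rwa [Finset.insert_eq_self.mpr hmem] at h'
      · intro A hA h2A
        rw [Finset.mem_filter] at hA
        obtain ⟨B', hB', C', hC', hu', hi'⟩ := hsplit A hA.1 h2A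
        have hB'A : B' ⊆ A := by rw [← hu']; exact Finset.subset_union_left
        have hC'A : C' ⊆ A := by rw [← hu']; exact Finset.subset_union_right
        exact ⟨B', Finset.mem_filter.mpr ⟨hB', hB'A.trans hA.2⟩,
          C', Finset.mem_filter.mpr ⟨hC', hC'A.trans hA.2⟩, hu', hi'⟩
    have e1 := ih B _ (by omega) hBinB
    have e2 := ih (S \ B) _ (by omega) hBinD
    omega

/-- The restriction of a hierarchy is a hierarchy. -/
lemma hierarchy_restrict {S K : Finset α} {F : Finset (Finset α)}
    (hH : IsHierarchy S F) (hKS : K ⊆ S) (hKne : K.Nonempty) :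
    IsHierarchy K (restrictFam F K) := by
  obtain ⟨h1, h2, h3, h4⟩ := hH
  refine ⟨?_, ?_, ?_, ?_⟩
  · intro A' hA'
    obtain ⟨hne, A, hA, hAK⟩ := mem_restrictFam.mp hA'
    exact ⟨by rw [← hAK]; exact Finset.inter_subset_right, hne⟩
  · intro A' hA' B' hB'
    obtain ⟨_, A, hA, hAK⟩ := mem_restrictFam.mp hA'
    obtain ⟨_, B, hB, hBK⟩ := mem_restrictFam.mp hB'
    rw [← hAK, ← hBK]
    exact compatible_inter (h2 A hA B hB)
  · exact mem_restrictFam.mpr ⟨hKne, S, h3, Finset.inter_eq_right.mpr hKS⟩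
  · intro i hi
    refine mem_restrictFam.mpr ⟨Finset.singleton_nonempty i, {i}, h4 i (hKS hi), ?_⟩
    exact Finset.inter_eq_left.mpr (Finset.singleton_subset_iff.mpr hi)

/-- The restriction of a binary hierarchy is binary. -/
lemma binary_restrict {S K : Finset α} {F : Finset (Finset α)}
    (hBin : Binary S F) (hKS : K ⊆ S) (hKne : K.Nonempty) :
    Binary K (restrictFam F K) := by
  obtain ⟨hH, hsplit⟩ := hBin
  refine ⟨hierarchy_restrict hH hKS hKne, ?_⟩
  intro A' hA' h2A'
  obtain ⟨hne, A₀, hA₀, hA₀K⟩ := mem_restrictFam.mp hA'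
  have hTne : (F.filter fun A => A ∩ K = A').Nonempty :=
    ⟨A₀, Finset.mem_filter.mpr ⟨hA₀, hA₀K⟩⟩
  obtain ⟨A, hAmem, hAmin⟩ := Finset.exists_min_image _ Finset.card hTne
  rw [Finset.mem_filter] at hAmem
  obtain ⟨hAF, hAK⟩ := hAmem
  have h2A : 2 ≤ A.card := by
    have : A'.card ≤ A.card := by
      rw [← hAK]; exact Finset.card_le_card Finset.inter_subset_left
    omega
  obtain ⟨B, hBF, C, hCF, hu, hi⟩ := hsplit A hAF h2A
  have hBne : B.Nonempty := (hH.1 B hBF).2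
  have hCne : C.Nonempty := (hH.1 C hCF).2
  have hBA : B ⊆ A := by rw [← hu]; exact Finset.subset_union_left
  have hCA : C ⊆ A := by rw [← hu]; exact Finset.subset_union_right
  have huK : (B ∩ K) ∪ (C ∩ K) = A' := by
    rw [← Finset.union_inter_distrib_right, hu, hAK]
  have hiK : (B ∩ K) ∩ (C ∩ K) = ∅ := by
    apply Finset.eq_empty_of_forall_notMem
    intro x hx
    simp only [Finset.mem_inter] at hx
    have : x ∈ B ∩ C := Finset.mem_inter.mpr ⟨hx.1.1, hx.2.1⟩
    rw [hi] at this
    exact absurd this (Finset.notMem_empty x)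
  -- neither part has empty trace on K
  have key : ∀ D E : Finset α, D ∈ F → E ∈ F → D ∪ E = A → D ∩ E = ∅ →
      D ∩ K = ∅ → False := by
    intro D E hDF hEF huDE hiDE hDK
    have hEK : E ∩ K = A' := by
      rw [← hAK, ← huDE, Finset.union_inter_distrib_right, hDK, Finset.empty_union]
    have hEmem : E ∈ F.filter fun A => A ∩ K = A' := Finset.mem_filter.mpr ⟨hEF, hEK⟩
    have hle := hAmin E hEmem
    have hEsub : E ⊆ A := by rw [← huDE]; exact Finset.subset_union_right
    have hEA : E ⊂ A := by
      refine lt_of_le_of_ne hEsub fun h => ?_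
      obtain ⟨d, hd⟩ := (hH.1 D hDF).2
      have hdE : d ∈ E := by
        rw [h]; rw [← huDE]; exact Finset.mem_union_left _ hd
      have : d ∈ D ∩ E := Finset.mem_inter.mpr ⟨hd, hdE⟩
      rw [hiDE] at this
      exact absurd this (Finset.notMem_empty d)
    have := Finset.card_lt_card hEA
    omega
  have hBKne : (B ∩ K).Nonempty := by
    rcases Finset.eq_empty_or_nonempty (B ∩ K) with h | h
    · exact absurd h fun h' => key B C hBF hCF hu hi h'
    · exact h
  have hCKne : (C ∩ K).Nonempty := by
    rcases Finset.eq_empty_or_nonempty (C ∩ K) with h | h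
    · exfalso
      refine key C B hCF hBF ?_ ?_ h
      · rw [Finset.union_comm]; exact hu
      · rw [Finset.inter_comm]; exact hi
    · exact h
  exact ⟨B ∩ K, mem_restrictFam.mpr ⟨hBKne, B, hBF, rfl⟩,
    C ∩ K, mem_restrictFam.mpr ⟨hCKne, C, hCF, rfl⟩, huK, hiK⟩

lemma restrictFam_self {K : Finset α} {G : Finset (Finset α)}
    (h : ∀ A ∈ G, A ⊆ K ∧ A.Nonempty) : restrictFam G K = G := by
  ext A'
  rw [mem_restrictFam]
  constructor
  · rintro ⟨hne, A, hA, hAK⟩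
    have : A ∩ K = A := Finset.inter_eq_left.mpr (h A hA).1
    rw [this] at hAK
    rwa [← hAK]
  · intro hA'
    exact ⟨(h A' hA').2, A', hA', Finset.inter_eq_left.mpr (h A' hA').1⟩

/-- Extension: any nondegenerate hierarchy over `K` extends to one over `S`. -/
lemma extend_aux : ∀ n (S K : Finset α), K ⊆ S → K.Nonempty → (S \ K).card ≤ n →
    ∀ G : Finset (Finset α), Nondeg K G →
      ∃ F : Finset (Finset α), Nondeg S F ∧ restrictFam F K = G := by
  intro n
  induction n with
  | zero =>
    intro S K hKS hKne hc G hG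
    have hSK : S = K := by
      apply le_antisymm _ hKS
      intro x hx
      by_contra hxK
      have : x ∈ S \ K := Finset.mem_sdiff.mpr ⟨hx, hxK⟩
      have := Finset.card_pos.mpr ⟨x, this⟩
      omega
    subst hSK
    exact ⟨G, hG, restrictFam_self hG.1.1⟩
  | succ n ih =>
    intro S K hKS hKne hc G hG
    rcases Finset.eq_empty_or_nonempty (S \ K) with hemp | ⟨x, hx⟩
    · have hSK : S = K := by
        apply le_antisymm _ hKS
        intro y hy
        by_contra hyK
        have : y ∈ S \ K := Finset.mem_sdiff.mpr ⟨hy, hyK⟩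
        rw [hemp] at this
        exact absurd this (Finset.notMem_empty y)
      subst hSK
      exact ⟨G, hG, restrictFam_self hG.1.1⟩
    obtain ⟨hxS, hxK⟩ := Finset.mem_sdiff.mp hx
    set S' := S.erase x with hS'
    have hKS' : K ⊆ S' := fun y hy =>
      Finset.mem_erase.mpr ⟨fun h => hxK (h ▸ hy), hKS hy⟩
    have hS'sub : S' ⊆ S := Finset.erase_subset x S
    have hS'card : S'.card = S.card - 1 := Finset.card_erase_of_mem hxS
    have hxS' : x ∉ S' := Finset.notMem_erase x S
    have hsd : (S' \ K).card ≤ n := by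
      have : S' \ K = (S \ K).erase x := by
        ext y
        simp only [Finset.mem_sdiff, Finset.mem_erase, hS']
        tauto
      rw [this, Finset.card_erase_of_mem hx]
      omega
    obtain ⟨F', hF', hrest⟩ := ih S' K hKS' hKne hsd G hG
    obtain ⟨⟨hh1, hh2, hh3, hh4⟩, hcard'⟩ := hF'
    refine ⟨insert S (insert {x} F'), ⟨⟨?_, ?_, ?_, ?_⟩, ?_⟩, ?_⟩
    · intro A hA
      rcases Finset.mem_insert.mp hA with rfl | hA
      · exact ⟨subset_rfl, ⟨x, hxS⟩⟩
      rcases Finset.mem_insert.mp hA with rfl | hA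
      · exact ⟨Finset.singleton_subset_iff.mpr hxS, Finset.singleton_nonempty x⟩
      · exact ⟨((hh1 A hA).1).trans hS'sub, (hh1 A hA).2⟩
    · intro A hA B hB
      have hmemsub : ∀ C, C ∈ insert S (insert {x} F') → C ⊆ S := by
        intro C hC
        rcases Finset.mem_insert.mp hC with rfl | hC
        · exact subset_rfl
        rcases Finset.mem_insert.mp hC with rfl | hC
        · exact Finset.singleton_subset_iff.mpr hxS
        · exact ((hh1 C hC).1).trans hS'sub
      rcases Finset.mem_insert.mp hA with hAS | hA'
      · rw [hAS]; exact Or.inr (Or.inr (hmemsub B hB))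
      rcases Finset.mem_insert.mp hB with hBS | hB'
      · rw [hBS]; exact Or.inr (Or.inl (hmemsub A hA))
      rcases Finset.mem_insert.mp hA' with hAx | hA''
      · rcases Finset.mem_insert.mp hB' with hBx | hB''
        · rw [hAx, hBx]; exact Or.inr (Or.inl subset_rfl)
        · rw [hAx]
          left
          apply Finset.eq_empty_of_forall_notMem
          intro y hy
          obtain ⟨hy1, hy2⟩ := Finset.mem_inter.mp hy
          rw [Finset.mem_singleton] at hy1
          subst hy1
          exact hxS' ((hh1 B hB'').1 hy2)
      rcases Finset.mem_insert.mp hB' with hBx | hB''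
      · rw [hBx]
        left
        apply Finset.eq_empty_of_forall_notMem
        intro y hy
        obtain ⟨hy1, hy2⟩ := Finset.mem_inter.mp hy
        rw [Finset.mem_singleton] at hy2
        subst hy2
        exact hxS' ((hh1 A hA'').1 hy1)
      · exact hh2 A hA'' B hB''
    · exact Finset.mem_insert_self _ _
    · intro i hi
      by_cases hix : i = x
      · subst hix
        exact Finset.mem_insert.mpr (Or.inr (Finset.mem_insert_self _ _))
      · refine Finset.mem_insert.mpr (Or.inr (Finset.mem_insert.mpr (Or.inr ?_)))
        exact hh4 i (Finset.mem_erase.mpr ⟨hix, hi⟩)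
    · -- cardinality
      have hxF' : ({x} : Finset α) ∉ F' := fun h =>
        hxS' ((hh1 _ h).1 (Finset.mem_singleton_self x))
      have hSF' : S ∉ insert {x} F' := by
        intro h
        rcases Finset.mem_insert.mp h with h | h
        · obtain ⟨k, hk⟩ := hKne
          have hkS : k ∈ S := hKS hk
          rw [h, Finset.mem_singleton] at hkS
          exact hxK (hkS ▸ hk)
        · exact hxS' ((hh1 S h).1 hxS)
      rw [Finset.card_insert_of_notMem hSF', Finset.card_insert_of_notMem hxF']
      have hKcard : 1 ≤ K.card := Finset.card_pos.mpr hKne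
      have hK'card : K.card ≤ S'.card := Finset.card_le_card hKS'
      have hScard : 1 ≤ S.card := Finset.card_pos.mpr ⟨x, hxS⟩
      omega
    · -- restriction
      rw [← hrest]
      ext A'
      rw [mem_restrictFam, mem_restrictFam]
      constructor
      · rintro ⟨hne, A, hA, hAK⟩
        rcases Finset.mem_insert.mp hA with rfl | hA
        · refine ⟨hne, S', hh3, ?_⟩
          rw [Finset.inter_eq_right.mpr hKS'] at *
          rw [← hAK, Finset.inter_eq_right.mpr hKS]
        rcases Finset.mem_insert.mp hA with rfl | hA
        · exfalso
          obtain ⟨y, hy⟩ := hne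
          rw [← hAK] at hy
          obtain ⟨hy1, hy2⟩ := Finset.mem_inter.mp hy
          rw [Finset.mem_singleton] at hy1
          exact hxK (hy1 ▸ hy2)
        · exact ⟨hne, A, hA, hAK⟩
      · rintro ⟨hne, A, hA, hAK⟩
        exact ⟨hne, A, Finset.mem_insert.mpr (Or.inr (Finset.mem_insert.mpr (Or.inr hA))), hAK⟩

theorem restriction_of_nondeg (S K : Finset α) (hKS : K ⊆ S) (hK : 2 ≤ K.card) :
    (∀ F : Finset (Finset α), Nondeg S F → Nondeg K (restrictFam F K)) ∧
    (∀ G : Finset (Finset α), Nondeg K G →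
      ∃ F : Finset (Finset α), Nondeg S F ∧ restrictFam F K = G) := by
  have hKne : K.Nonempty := Finset.card_pos.mp (by omega)
  constructor
  · intro F hF
    have hBin : Binary S F := nondeg_binary S.card S F le_rfl hF
    have hBinK : Binary K (restrictFam F K) := binary_restrict hBin hKS hKne
    exact ⟨hBinK.1, binary_card K.card K _ le_rfl hBinK⟩
  · intro G hG
    exact extend_aux (S \ K).card S K hKS hKne le_rfl G hG

end TreeDist
end

section
/- Let 𝒜 be a hierarchy over a finite set S and let h : 𝒜 → ℝ≥0. Define d(i,j) = h(ca(i,j)) for i,j ∈ S, where ca(i,j) is the smallest cluster of 𝒜 containing both i and j. Then d is an ultrametric on S (that is, d is nonnegative, symmetric, d(i,j) = 0 iff i = j, and d(i,j) ≤ max(d(i,k), d(k,j)) for all i,j,k ∈ S) if and only if both of the following hold for all clusters I, J ∈ 𝒜: (i) if I ⊆ J then h(I) ≤ h(J), and (ii) h(I) = 0 if and only if |I| = 1. -/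
open scoped Classical

namespace TreeDist

variable {α : Type*} [DecidableEq α]

lemma nested_of_mem {F : Finset (Finset α)}
    (hlam : ∀ A ∈ F, ∀ B ∈ F, Compatible A B) {A B : Finset α}
    (hA : A ∈ F) (hB : B ∈ F) {x : α} (hxA : x ∈ A) (hxB : x ∈ B) :
    A ⊆ B ∨ B ⊆ A := by
  rcases hlam A hA B hB with hd | hs | hs
  · exact absurd (Finset.mem_inter.mpr ⟨hxA, hxB⟩) (by simp [hd])
  · exact Or.inl hs
  · exact Or.inr hs

/-- Key structural lemma: if `I ⊊ J` are clusters, there is `l ∈ J \\ I` such that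
any cluster containing `l` and meeting `I` contains all of `J`. -/
lemma exists_outer {S : Finset α} {F : Finset (Finset α)} (hF : IsHierarchy S F)
    {I J : Finset α} (hI : I ∈ F) (hJ : J ∈ F) (hIJ : I ⊂ J) :
    ∃ l ∈ J, l ∉ I ∧ ∀ A ∈ F, l ∈ A → (A ∩ I).Nonempty → J ⊆ A := by
  obtain ⟨hsub, hlam, hSF, hsing⟩ := hF
  obtain ⟨i, hi⟩ := (hsub I hI).2
  set T := F.filter (fun A => i ∈ A ∧ A ⊂ J) with hT
  have hIT : I ∈ T := by simp [hT, hI, hi, hIJ]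
  obtain ⟨C, hCT, hCmax⟩ := T.exists_max_image Finset.card ⟨I, hIT⟩
  simp only [hT, Finset.mem_filter] at hCT
  obtain ⟨hCF, hiC, hCJ⟩ := hCT
  have hsubC : ∀ A ∈ F, i ∈ A → A ⊂ J → A ⊆ C := by
    intro A hA hiA hAJ
    rcases nested_of_mem hlam hA hCF hiA hiC with hs | hs
    · exact hs
    · have : A.card ≤ C.card := hCmax A (by simp [hT, hA, hiA, hAJ])
      exact le_of_eq (Finset.eq_of_subset_of_card_le hs this).symm
  have hIC : I ⊆ C := hsubC I hI hi hIJ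
  obtain ⟨l, hlJ, hlC⟩ := Finset.exists_of_ssubset hCJ
  refine ⟨l, hlJ, fun hl => hlC (hIC hl), ?_⟩
  rintro A hA hlA ⟨x, hx⟩
  rw [Finset.mem_inter] at hx
  have hxC : x ∈ C := hIC hx.2
  rcases nested_of_mem hlam hA hCF hx.1 hxC with hs | hs
  · exact absurd (hs hlA) hlC
  · have hiA : i ∈ A := hs hiC
    rcases nested_of_mem hlam hA hJ hlA hlJ with hs' | hs'
    · rcases eq_or_ne A J with rfl | hne
      · exact subset_rfl
      · exact absurd (hsubC A hA hiA (ssubset_of_subset_of_ne hs' hne) hlA) hlC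
    · exact hs'

theorem ultrametric_iff (S : Finset α) (F : Finset (Finset α)) (hF : IsHierarchy S F)
    (ca : α → α → Finset α)
    (hca : ∀ i ∈ S, ∀ j ∈ S, ca i j ∈ F ∧ i ∈ ca i j ∧ j ∈ ca i j ∧
      ∀ A ∈ F, i ∈ A → j ∈ A → (ca i j).card ≤ A.card)
    (h : Finset α → ℝ) (hnn : ∀ A ∈ F, 0 ≤ h A) :
    ((∀ i ∈ S, ∀ j ∈ S, 0 ≤ h (ca i j)) ∧
     (∀ i ∈ S, ∀ j ∈ S, h (ca i j) = h (ca j i)) ∧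
     (∀ i ∈ S, ∀ j ∈ S, (h (ca i j) = 0 ↔ i = j)) ∧
     (∀ i ∈ S, ∀ j ∈ S, ∀ k ∈ S, h (ca i j) ≤ max (h (ca i k)) (h (ca k j)))) ↔
    ((∀ I ∈ F, ∀ J ∈ F, I ⊆ J → h I ≤ h J) ∧ (∀ I ∈ F, (h I = 0 ↔ I.card = 1))) := by
  obtain ⟨hsub, hlam, hSF, hsing⟩ := hF
  have hF' : IsHierarchy S F := ⟨hsub, hlam, hSF, hsing⟩
  -- ca is characterized as the minimum cluster containing both points
  have caeq : ∀ i ∈ S, ∀ j ∈ S, ∀ A ∈ F, i ∈ A → j ∈ A →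
      (∀ B ∈ F, i ∈ B → j ∈ B → A ⊆ B) → ca i j = A := by
    intro i hi j hj A hA hiA hjA hmin
    obtain ⟨hcF, hic, hjc, hcard⟩ := hca i hi j hj
    exact (Finset.eq_of_subset_of_card_le (hmin _ hcF hic hjc) (hcard A hA hiA hjA)).symm
  have casingle : ∀ i ∈ S, ca i i = {i} := by
    intro i hi
    refine caeq i hi i hi {i} (hsing i hi) (Finset.mem_singleton_self i)
      (Finset.mem_singleton_self i) ?_
    intro B hB hiB _
    simpa using hiB
  -- every cluster of card ≥ 2 is a smallest common ancestor
  have cabig : ∀ I ∈ F, ∀ i ∈ I, 2 ≤ I.card → ∃ j ∈ I, j ≠ i ∧ ca i j = I := by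
    intro I hI i hiI h2
    have hiS : i ∈ S := (hsub I hI).1 hiI
    have hss : ({i} : Finset α) ⊂ I := by
      refine Finset.ssubset_iff_subset_ne.mpr ⟨Finset.singleton_subset_iff.mpr hiI, ?_⟩
      intro hcontra
      rw [← hcontra] at h2; simp at h2
    obtain ⟨j, hjI, hjn, hjkey⟩ := exists_outer hF' (hsing i hiS) hI hss
    have hjS : j ∈ S := (hsub I hI).1 hjI
    refine ⟨j, hjI, by simpa using hjn, ?_⟩
    refine caeq i hiS j hjS I hI hiI hjI ?_
    intro B hB hiB hjB
    exact hjkey B hB hjB ⟨i, Finset.mem_inter.mpr ⟨hiB, Finset.mem_singleton_self i⟩⟩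
  constructor
  · rintro ⟨_, _, hzero, hult⟩
    have hsinglezero : ∀ i ∈ S, h ({i} : Finset α) = 0 := by
      intro i hi
      have := (hzero i hi i hi).mpr rfl
      rwa [casingle i hi] at this
    constructor
    · -- monotonicity
      intro I hI J hJ hIJ
      rcases eq_or_ne I J with rfl | hne
      · exact le_refl _
      have hIJ' : I ⊂ J := ssubset_of_subset_of_ne hIJ hne
      obtain ⟨i, hiI⟩ := (hsub I hI).2
      have hiS : i ∈ S := (hsub I hI).1 hiI
      rcases Nat.lt_or_ge I.card 2 with h1 | h2
      · -- I is a singleton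
        have hc1 : I.card = 1 := le_antisymm (Nat.lt_succ_iff.mp h1) (Finset.card_pos.mpr ⟨i, hiI⟩)
        obtain ⟨a, ha⟩ := Finset.card_eq_one.mp hc1
        have haS : a ∈ S := (hsub I hI).1 (ha ▸ Finset.mem_singleton_self a)
        rw [ha, hsinglezero a haS]
        exact hnn J hJ
      · obtain ⟨j, hjI, hjne, hcaij⟩ := cabig I hI i hiI h2
        have hjS : j ∈ S := (hsub I hI).1 hjI
        obtain ⟨l, hlJ, hlI, hlkey⟩ := exists_outer hF' hI hJ hIJ'
        have hlS : l ∈ S := (hsub J hJ).1 hlJ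
        have hcail : ca i l = J := by
          refine caeq i hiS l hlS J hJ (hIJ hiI) hlJ ?_
          intro B hB hiB hlB
          exact hlkey B hB hlB ⟨i, Finset.mem_inter.mpr ⟨hiB, hiI⟩⟩
        have hcalj : ca l j = J := by
          refine caeq l hlS j hjS J hJ hlJ (hIJ hjI) ?_
          intro B hB hlB hjB
          exact hlkey B hB hlB ⟨j, Finset.mem_inter.mpr ⟨hjB, hjI⟩⟩
        have := hult i hiS j hjS l hlS
        rw [hcaij, hcail, hcalj, max_self] at this
        exact this
    · -- zero iff singleton
      intro I hI
      obtain ⟨i, hiI⟩ := (hsub I hI).2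
      have hiS : i ∈ S := (hsub I hI).1 hiI
      constructor
      · intro hh
        by_contra hc1
        have h2 : 2 ≤ I.card := by
          rcases Nat.lt_or_ge I.card 2 with h1 | h2
          · exact absurd (le_antisymm (Nat.lt_succ_iff.mp h1)
              (Finset.card_pos.mpr ⟨i, hiI⟩)) hc1
          · exact h2
        obtain ⟨j, hjI, hjne, hcaij⟩ := cabig I hI i hiI h2
        have hjS : j ∈ S := (hsub I hI).1 hjI
        have := (hzero i hiS j hjS).mp (by rw [hcaij]; exact hh)
        exact hjne this.symm
      · intro hc1
        obtain ⟨a, ha⟩ := Finset.card_eq_one.mp hc1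
        have haS : a ∈ S := (hsub I hI).1 (ha ▸ Finset.mem_singleton_self a)
        rw [ha]; exact hsinglezero a haS
  · rintro ⟨hmono, hzero⟩
    have casub : ∀ i ∈ S, ∀ j ∈ S, ∀ A ∈ F, i ∈ A → j ∈ A → ca i j ⊆ A := by
      intro i hi j hj A hA hiA hjA
      obtain ⟨hcF, hic, hjc, hcard⟩ := hca i hi j hj
      rcases nested_of_mem hlam hcF hA hic hiA with hs | hs
      · exact hs
      · exact le_of_eq (Finset.eq_of_subset_of_card_le hs (hcard A hA hiA hjA)).symm
    refine ⟨fun i hi j hj => hnn _ (hca i hi j hj).1, ?_, ?_, ?_⟩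
    · intro i hi j hj
      congr 1
      obtain ⟨hcF, hic, hjc, _⟩ := hca i hi j hj
      obtain ⟨hcF', hjc', hic', _⟩ := hca j hj i hi
      exact le_antisymm (casub i hi j hj _ hcF' hic' hjc')
        (casub j hj i hi _ hcF hjc hic)
    · intro i hi j hj
      obtain ⟨hcF, hic, hjc, _⟩ := hca i hi j hj
      rw [hzero _ hcF]
      constructor
      · intro hc1
        exact Finset.card_le_one.mp (le_of_eq hc1) i hic j hjc
      · rintro rfl
        rw [casingle i hi]; simp
    · intro i hi j hj k hk
      obtain ⟨hikF, hiik, hkik, _⟩ := hca i hi k hk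
      obtain ⟨hkjF, hkkj, hjkj, _⟩ := hca k hk j hj
      obtain ⟨hijF, hiij, hjij, _⟩ := hca i hi j hj
      rcases nested_of_mem hlam hikF hkjF hkik hkkj with hs | hs
      · -- ca i k ⊆ ca k j, so i,j ∈ ca k j
        have : ca i j ⊆ ca k j := casub i hi j hj _ hkjF (hs hiik) hjkj
        exact le_max_of_le_right (hmono _ hijF _ hkjF this)
      · have : ca i j ⊆ ca i k := casub i hi j hj _ hikF hiik (hs hjkj)
        exact le_max_of_le_left (hmono _ hijF _ hikF this)

end TreeDist
end

section
/- Let S be a finite set. The ultrametric representation map 𝒜 ↦ U(𝒜), sending a hierarchy 𝒜 over S to the S×S matrix with entries U(𝒜)_{ij} = |ca(i,j)| − 1, is injective on the set of all hierarchies over S: if 𝒜 ≠ ℬ are hierarchies over S, then U(𝒜) ≠ U(ℬ). -/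
open scoped Classical

namespace TreeDist

variable {α : Type*} [DecidableEq α]

lemma caCard_le_card {F : Finset (Finset α)} {i j : α} {A : Finset α}
    (hA : A ∈ F) (hi : i ∈ A) (hj : j ∈ A) : caCard F i j ≤ A.card :=
  Nat.sInf_le ⟨A, hA, hi, hj, rfl⟩

lemma exists_caCard {S : Finset α} {F : Finset (Finset α)} (hF : IsHierarchy S F)
    {i j : α} (hi : i ∈ S) (hj : j ∈ S) :
    ∃ A ∈ F, i ∈ A ∧ j ∈ A ∧ A.card = caCard F i j := by
  have hne : {n | ∃ A ∈ F, i ∈ A ∧ j ∈ A ∧ A.card = n}.Nonempty :=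
    ⟨S.card, S, hF.2.2.1, hi, hj, rfl⟩
  exact Nat.sInf_mem hne

/-- Membership in a cluster via `caCard`. -/
lemma mem_iff_caCard {S : Finset α} {F : Finset (Finset α)} (hF : IsHierarchy S F)
    {A : Finset α} (hA : A ∈ F) {i j : α} (hi : i ∈ A) (hj : j ∈ S) :
    j ∈ A ↔ caCard F i j ≤ A.card := by
  constructor
  · intro hjA; exact caCard_le_card hA hi hjA
  · intro hle
    obtain ⟨D, hD, hiD, hjD, hcard⟩ :=
      exists_caCard hF ((hF.1 A hA).1 hi) hj
    have hcomp := hF.2.1 D hD A hA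
    rcases hcomp with hdis | hsub | hsub
    · exact absurd (Finset.mem_inter.mpr ⟨hiD, hi⟩) (by simp [hdis])
    · exact hsub hjD
    · have : A = D := Finset.eq_of_subset_of_card_le hsub (by omega)
      exact this ▸ hjD

lemma subset_of_caCard_eq {S : Finset α} {F G : Finset (Finset α)}
    (hF : IsHierarchy S F) (hG : IsHierarchy S G)
    (h : ∀ i ∈ S, ∀ j ∈ S, caCard F i j = caCard G i j) : F ⊆ G := by
  intro A hA
  obtain ⟨hAS, hAne⟩ := hF.1 A hA
  obtain ⟨i, hi⟩ := hAne
  have hiS : i ∈ S := hAS hi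
  -- take a maximal-cardinality cluster of G containing i with card ≤ |A|
  set T : Finset (Finset α) := G.filter (fun C => i ∈ C ∧ C.card ≤ A.card) with hT
  have hTne : T.Nonempty := by
    refine ⟨{i}, Finset.mem_filter.mpr ⟨hG.2.2.2 i hiS, Finset.mem_singleton_self i, ?_⟩⟩
    simpa using Finset.card_pos.mpr ⟨i, hi⟩
  obtain ⟨C, hCT, hCmax⟩ := T.exists_max_image Finset.card hTne
  obtain ⟨hCG, hiC, hCle⟩ := Finset.mem_filter.mp hCT
  have hCS : C ⊆ S := (hG.1 C hCG).1
  have hAC : A = C := by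
    apply Finset.Subset.antisymm
    · intro j hjA
      have hjS : j ∈ S := hAS hjA
      have h1 : caCard G i j ≤ A.card := by
        rw [← h i hiS j hjS]; exact caCard_le_card hA hi hjA
      obtain ⟨D, hD, hiD, hjD, hcard⟩ := exists_caCard hG hiS hjS
      have hDT : D ∈ T := Finset.mem_filter.mpr ⟨hD, hiD, by omega⟩
      rcases hG.2.1 D hD C hCG with hdis | hsub | hsub
      · exact absurd (Finset.mem_inter.mpr ⟨hiD, hiC⟩) (by simp [hdis])
      · exact hsub hjD
      · have : C = D := Finset.eq_of_subset_of_card_le hsub (hCmax D hDT)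
        exact this ▸ hjD
    · intro j hjC
      have hjS : j ∈ S := hCS hjC
      have h1 : caCard F i j ≤ A.card := by
        rw [h i hiS j hjS]
        exact le_trans (caCard_le_card hCG hiC hjC) hCle
      exact (mem_iff_caCard hF hA hi hjS).mpr h1
  exact hAC ▸ hCG

theorem ultrametric_representation_injective (S : Finset α) (F G : Finset (Finset α))
    (hF : IsHierarchy S F) (hG : IsHierarchy S G) (hne : F ≠ G) :
    ∃ i ∈ S, ∃ j ∈ S, Umat F i j ≠ Umat G i j := by
  by_contra hcon
  push_neg at hcon
  have hca : ∀ i ∈ S, ∀ j ∈ S, caCard F i j = caCard G i j := by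
    intro i hi j hj
    have := hcon i hi j hj
    unfold Umat at this
    exact_mod_cast sub_left_injective this
  exact hne (Finset.Subset.antisymm
    (subset_of_caCard_eq hF hG hca)
    (subset_of_caCard_eq hG hF (fun i hi j hj => (hca i hi j hj).symm)))

end TreeDist
end

section
/- Let S be a finite set with |S| = n, let (𝒜,ℬ) be an NNI edge between nondegenerate hierarchies over S, and let (A,B,C) be its NNI triplet, i.e., the unique ordered triple of common clusters with 𝒜 \ ℬ = {A∪B} and ℬ \ 𝒜 = {B∪C}. Then the cluster-cardinality distance satisfies d_CC(𝒜,ℬ) = 2·|A|·|B|·|C|, and 2 ≤ d_CC(𝒜,ℬ) ≤ ⌊2n³/27⌋. -/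
open scoped Classical

namespace TreeDist

variable {α : Type*} [DecidableEq α]

lemma subset_of_compat {A D : Finset α} (h : Compatible A D) {i j : α}
    (hiA : i ∈ A) (hiD : i ∈ D) (hjD : j ∈ D) (hjA : j ∉ A) : A ⊆ D := by
  rcases h with h | h | h
  · exact absurd (Finset.mem_inter.mpr ⟨hiA, hiD⟩) (by simp [h])
  · exact h
  · exact absurd (h hjD) hjA

lemma exists_min_cluster {S : Finset α} {F : Finset (Finset α)} (hF : IsHierarchy S F)
    {i j : α} (hi : i ∈ S) (hj : j ∈ S) :
    ∃ M ∈ F, i ∈ M ∧ j ∈ M ∧ ∀ D ∈ F, i ∈ D → j ∈ D → M ⊆ D := by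
  obtain ⟨M, hM, hmin⟩ := Finset.exists_min_image
    (F.filter fun D => i ∈ D ∧ j ∈ D) Finset.card
    ⟨S, by simp [hF.2.2.1, hi, hj]⟩
  simp only [Finset.mem_filter] at hM
  refine ⟨M, hM.1, hM.2.1, hM.2.2, ?_⟩
  intro D hD hiD hjD
  rcases hF.2.1 M hM.1 D hD with h | h | h
  · exact absurd (Finset.mem_inter.mpr ⟨hM.2.1, hiD⟩) (by simp [h])
  · exact h
  · have hle := hmin D (Finset.mem_filter.mpr ⟨hD, hiD, hjD⟩)
    exact subset_of_eq (Finset.eq_of_subset_of_card_le h hle).symm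

lemma caCard_eq {F : Finset (Finset α)} {i j : α} {M : Finset α} (hM : M ∈ F)
    (hi : i ∈ M) (hj : j ∈ M) (hmin : ∀ D ∈ F, i ∈ D → j ∈ D → M ⊆ D) :
    caCard F i j = M.card := by
  refine le_antisymm (Nat.sInf_le ⟨M, hM, hi, hj, rfl⟩) ?_
  refine le_csInf ⟨M.card, ?_⟩ ?_
  · exact ⟨M, hM, hi, hj, rfl⟩
  rintro n ⟨D, hD, hiD, hjD, rfl⟩
  exact Finset.card_le_card (hmin D hD hiD hjD)

lemma caCard_comm (F : Finset (Finset α)) (i j : α) : caCard F i j = caCard F j i := by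
  unfold caCard
  congr 1
  ext n
  constructor <;> rintro ⟨D, hD, h1, h2, rfl⟩ <;> exact ⟨D, hD, h2, h1, rfl⟩

lemma amgm (a b c : ℕ) : 27 * (a * b * c) ≤ (a + b + c) ^ 3 := by
  have ha : (0:ℤ) ≤ a := Int.natCast_nonneg a
  have hb : (0:ℤ) ≤ b := Int.natCast_nonneg b
  have hc : (0:ℤ) ≤ c := Int.natCast_nonneg c
  zify
  nlinarith [mul_nonneg ha (sq_nonneg ((b:ℤ)-c)), mul_nonneg hb (sq_nonneg ((a:ℤ)-c)),
    mul_nonneg hc (sq_nonneg ((a:ℤ)-b)), mul_nonneg (mul_nonneg ha hb) hc]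


theorem dCC_of_nni_edge (S : Finset α) (F G : Finset (Finset α))
    (hF : Nondeg S F) (hG : Nondeg S G) (hNNI : IsNNIMove F G)
    (A B C : Finset α)
    (hA : A ∈ F ∧ A ∈ G) (hB : B ∈ F ∧ B ∈ G) (hC : C ∈ F ∧ C ∈ G)
    (hFG : F \ G = {A ∪ B}) (hGF : G \ F = {B ∪ C}) :
    dCC S F G = ((2 * A.card * B.card * C.card : ℕ) : ℚ) ∧
    (2 : ℚ) ≤ dCC S F G ∧
    dCC S F G ≤ ((2 * S.card ^ 3 / 27 : ℕ) : ℚ) := by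
  classical
  obtain ⟨hAF, hAG⟩ := hA
  obtain ⟨hBF, hBG⟩ := hB
  obtain ⟨hCF, hCG⟩ := hC
  have hHF := hF.1
  have hHG := hG.1
  have compatF : ∀ D ∈ F, ∀ E ∈ F, Compatible D E := hHF.2.1
  have compatG : ∀ D ∈ G, ∀ E ∈ G, Compatible D E := hHG.2.1
  have neF : ∀ D ∈ F, D.Nonempty := fun D hD => (hHF.1 D hD).2
  have hX : A ∪ B ∈ F \ G := by rw [hFG]; exact Finset.mem_singleton_self _
  have hXF : A ∪ B ∈ F := (Finset.mem_sdiff.mp hX).1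
  have hXnG : A ∪ B ∉ G := (Finset.mem_sdiff.mp hX).2
  have hY : B ∪ C ∈ G \ F := by rw [hGF]; exact Finset.mem_singleton_self _
  have hYG : B ∪ C ∈ G := (Finset.mem_sdiff.mp hY).1
  have hYnF : B ∪ C ∉ F := (Finset.mem_sdiff.mp hY).2
  obtain ⟨C₀, P₀, GP₀, hC₀F, hPar1, hPar2, hGeq⟩ := hNNI
  have hP₀ : P₀ = A ∪ B := by
    by_contra h
    exact hXnG (hGeq ▸ Finset.mem_insert_of_mem (Finset.mem_erase.mpr ⟨fun e => h e.symm, hXF⟩))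
  have hYeq : GP₀ \ C₀ = B ∪ C := by
    have hmem : B ∪ C ∈ insert (GP₀ \ C₀) (F.erase P₀) := hGeq ▸ hYG
    rcases Finset.mem_insert.mp hmem with h | h
    · exact h.symm
    · exact absurd (Finset.mem_of_mem_erase h) hYnF
  have hGPF : GP₀ ∈ F := hPar2.1
  have hGPne : GP₀ ≠ P₀ := (hPar2.2.1).ne'
  have hGPG : GP₀ ∈ G := by
    rw [hGeq]; exact Finset.mem_insert_of_mem (Finset.mem_erase.mpr ⟨hGPne, hGPF⟩)
  have hC₀sub : C₀ ⊆ A ∪ B := by rw [← hP₀]; exact hPar1.2.1.subset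
  have hP₀GP : A ∪ B ⊆ GP₀ := by rw [← hP₀]; exact hPar2.2.1.subset
  have hGP : GP₀ = (A ∪ B) ∪ C := by
    apply Finset.Subset.antisymm
    · intro t ht
      by_cases htC : t ∈ C₀
      · exact Finset.mem_union_left _ (hC₀sub htC)
      · have ht2 : t ∈ GP₀ \ C₀ := Finset.mem_sdiff.mpr ⟨ht, htC⟩
        rw [hYeq] at ht2
        rcases Finset.mem_union.mp ht2 with h | h
        · exact Finset.mem_union_left _ (Finset.mem_union_right _ h)
        · exact Finset.mem_union_right _ h
    · refine Finset.union_subset hP₀GP ?_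
      intro t ht
      have ht2 : t ∈ GP₀ \ C₀ := by rw [hYeq]; exact Finset.mem_union_right _ ht
      exact (Finset.mem_sdiff.mp ht2).1
  have hAB : A ∩ B = ∅ := by
    rcases compatF A hAF B hBF with h | h | h
    · exact h
    · refine absurd ?_ hXnG; rw [Finset.union_eq_right.mpr h]; exact hBG
    · refine absurd ?_ hXnG; rw [Finset.union_eq_left.mpr h]; exact hAG
  have hBC : B ∩ C = ∅ := by
    rcases compatG B hBG C hCG with h | h | h
    · exact h
    · refine absurd ?_ hYnF; rw [Finset.union_eq_right.mpr h]; exact hCF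
    · refine absurd ?_ hYnF; rw [Finset.union_eq_left.mpr h]; exact hBF
  obtain ⟨t₀, ht₀GP, ht₀P⟩ := Finset.exists_of_ssubset hPar2.2.1
  rw [hP₀] at ht₀P
  have ht₀ABC : t₀ ∈ (A ∪ B) ∪ C := by rw [← hGP]; exact ht₀GP
  have ht₀C : t₀ ∈ C := by
    rcases Finset.mem_union.mp ht₀ABC with h | h
    · exact absurd h ht₀P
    · exact h
  have hAC : A ∩ C = ∅ := by
    rcases compatF A hAF C hCF with h | h | h
    · exact h
    · exfalso
      rcases compatF C hCF (A ∪ B) hXF with h2 | h2 | h2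
      · obtain ⟨a0, ha0⟩ := neF A hAF
        have : a0 ∈ C ∩ (A ∪ B) := Finset.mem_inter.mpr ⟨h ha0, Finset.mem_union_left _ ha0⟩
        simp [h2] at this
      · exact ht₀P (h2 ht₀C)
      · obtain ⟨b0, hb0⟩ := neF B hBF
        have : b0 ∈ B ∩ C := Finset.mem_inter.mpr ⟨hb0, h2 (Finset.mem_union_right _ hb0)⟩
        simp [hBC] at this
    · exact absurd (Finset.mem_union_left _ (h ht₀C)) ht₀P
  have notBofA : ∀ {i : α}, i ∈ A → i ∉ B := fun hiA hiB => by
    have : _ ∈ A ∩ B := Finset.mem_inter.mpr ⟨hiA, hiB⟩; simp [hAB] at this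
  have notCofA : ∀ {i : α}, i ∈ A → i ∉ C := fun hiA hiC => by
    have : _ ∈ A ∩ C := Finset.mem_inter.mpr ⟨hiA, hiC⟩; simp [hAC] at this
  have notAofB : ∀ {i : α}, i ∈ B → i ∉ A := fun hiB hiA => notBofA hiA hiB
  have notCofB : ∀ {i : α}, i ∈ B → i ∉ C := fun hiB hiC => by
    have : _ ∈ B ∩ C := Finset.mem_inter.mpr ⟨hiB, hiC⟩; simp [hBC] at this
  have notAofC : ∀ {i : α}, i ∈ C → i ∉ A := fun hiC hiA => notCofA hiA hiC
  have notBofC : ∀ {i : α}, i ∈ C → i ∉ B := fun hiC hiB => notCofB hiB hiC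
  have dAB : Disjoint A B := Finset.disjoint_iff_inter_eq_empty.mpr hAB
  have dBC : Disjoint B C := Finset.disjoint_iff_inter_eq_empty.mpr hBC
  have dAC : Disjoint A C := Finset.disjoint_iff_inter_eq_empty.mpr hAC
  have cardX : (A ∪ B).card = A.card + B.card := Finset.card_union_of_disjoint dAB
  have cardY : (B ∪ C).card = B.card + C.card := Finset.card_union_of_disjoint dBC
  have dABC : Disjoint (A ∪ B) C := Finset.disjoint_union_left.mpr ⟨dAC, dBC⟩
  have cardGP : ((A ∪ B) ∪ C).card = A.card + B.card + C.card := by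
    rw [Finset.card_union_of_disjoint dABC, cardX]
  have hABCF : (A ∪ B) ∪ C ∈ F := by rw [← hGP]; exact hGPF
  have hABCG : (A ∪ B) ∪ C ∈ G := by rw [← hGP]; exact hGPG
  -- the four ca computations
  have caF_AB : ∀ {i : α}, i ∈ A → ∀ {j : α}, j ∈ B → caCard F i j = A.card + B.card := by
    intro i hiA j hjB
    rw [← cardX]
    apply caCard_eq hXF (Finset.mem_union_left _ hiA) (Finset.mem_union_right _ hjB)
    intro D hD hiD hjD
    exact Finset.union_subset
      (subset_of_compat (compatF A hAF D hD) hiA hiD hjD (notAofB hjB))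
      (subset_of_compat (compatF B hBF D hD) hjB hjD hiD (notBofA hiA))
  have caG_AB : ∀ {i : α}, i ∈ A → ∀ {j : α}, j ∈ B →
      caCard G i j = A.card + B.card + C.card := by
    intro i hiA j hjB
    rw [← cardGP]
    apply caCard_eq hABCG (Finset.mem_union_left _ (Finset.mem_union_left _ hiA))
      (Finset.mem_union_left _ (Finset.mem_union_right _ hjB))
    intro D hD hiD hjD
    have hAD : A ⊆ D := subset_of_compat (compatG A hAG D hD) hiA hiD hjD (notAofB hjB)
    have hBD : B ⊆ D := subset_of_compat (compatG B hBG D hD) hjB hjD hiD (notBofA hiA)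
    have hiY : i ∉ B ∪ C := by
      intro h
      rcases Finset.mem_union.mp h with h | h
      · exact notBofA hiA h
      · exact notCofA hiA h
    have hYD : B ∪ C ⊆ D :=
      subset_of_compat (compatG _ hYG D hD) (Finset.mem_union_left _ hjB) hjD hiD hiY
    exact Finset.union_subset (Finset.union_subset hAD hBD)
      fun t ht => hYD (Finset.mem_union_right _ ht)
  have caF_BC : ∀ {i : α}, i ∈ B → ∀ {j : α}, j ∈ C →
      caCard F i j = A.card + B.card + C.card := by
    intro i hiB j hjC
    rw [← cardGP]
    apply caCard_eq hABCF (Finset.mem_union_left _ (Finset.mem_union_right _ hiB))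
      (Finset.mem_union_right _ hjC)
    intro D hD hiD hjD
    have hCD : C ⊆ D := subset_of_compat (compatF C hCF D hD) hjC hjD hiD (notCofB hiB)
    have hjX : j ∉ A ∪ B := by
      intro h
      rcases Finset.mem_union.mp h with h | h
      · exact notAofC hjC h
      · exact notBofC hjC h
    have hXD : A ∪ B ⊆ D :=
      subset_of_compat (compatF _ hXF D hD) (Finset.mem_union_right _ hiB) hiD hjD hjX
    exact Finset.union_subset hXD hCD
  have caG_BC : ∀ {i : α}, i ∈ B → ∀ {j : α}, j ∈ C → caCard G i j = B.card + C.card := by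
    intro i hiB j hjC
    rw [← cardY]
    apply caCard_eq hYG (Finset.mem_union_left _ hiB) (Finset.mem_union_right _ hjC)
    intro D hD hiD hjD
    exact Finset.union_subset
      (subset_of_compat (compatG B hBG D hD) hiB hiD hjD (notBofC hjC))
      (subset_of_compat (compatG C hCG D hD) hjC hjD hiD (notCofB hiB))
  -- equality in all other cases
  have ca_eq : ∀ {i : α}, i ∈ S → ∀ {j : α}, j ∈ S →
      ¬(i ∈ A ∧ j ∈ B) → ¬(i ∈ B ∧ j ∈ A) → ¬(i ∈ B ∧ j ∈ C) → ¬(i ∈ C ∧ j ∈ B) →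
      caCard F i j = caCard G i j := by
    intro i hi j hj h1 h2 h3 h4
    obtain ⟨M, hMF, hiM, hjM, hminF⟩ := exists_min_cluster hHF hi hj
    obtain ⟨N, hNG, hiN, hjN, hminG⟩ := exists_min_cluster hHG hi hj
    have hMG : M ∈ G := by
      by_contra hMnG
      have hM : M = A ∪ B := by
        have hm : M ∈ F \ G := Finset.mem_sdiff.mpr ⟨hMF, hMnG⟩
        rw [hFG] at hm; exact Finset.mem_singleton.mp hm
      rw [hM] at hiM hjM
      rcases Finset.mem_union.mp hiM with hiA | hiB <;>
        rcases Finset.mem_union.mp hjM with hjA | hjB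
      · have hMA : M ⊆ A := hminF A hAF hiA hjA
        obtain ⟨b0, hb0⟩ := neF B hBF
        exact notBofA (hMA (by rw [hM]; exact Finset.mem_union_right _ hb0)) hb0
      · exact h1 ⟨hiA, hjB⟩
      · exact h2 ⟨hiB, hjA⟩
      · have hMB : M ⊆ B := hminF B hBF hiB hjB
        obtain ⟨a0, ha0⟩ := neF A hAF
        exact notBofA ha0 (hMB (by rw [hM]; exact Finset.mem_union_left _ ha0))
    have hNF : N ∈ F := by
      by_contra hNnF
      have hN : N = B ∪ C := by
        have hn : N ∈ G \ F := Finset.mem_sdiff.mpr ⟨hNG, hNnF⟩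
        rw [hGF] at hn; exact Finset.mem_singleton.mp hn
      rw [hN] at hiN hjN
      rcases Finset.mem_union.mp hiN with hiB | hiC <;>
        rcases Finset.mem_union.mp hjN with hjB | hjC
      · have hNB : N ⊆ B := hminG B hBG hiB hjB
        obtain ⟨c0, hc0⟩ := neF C hCF
        exact notCofB (hNB (by rw [hN]; exact Finset.mem_union_right _ hc0)) hc0
      · exact h3 ⟨hiB, hjC⟩
      · exact h4 ⟨hiC, hjB⟩
      · have hNC : N ⊆ C := hminG C hCG hiC hjC
        obtain ⟨b0, hb0⟩ := neF B hBF
        exact notCofB hb0 (hNC (by rw [hN]; exact Finset.mem_union_left _ hb0))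
    rw [caCard_eq hMF hiM hjM hminF, caCard_eq hNG hiN hjN hminG]
    exact congrArg Finset.card
      (Finset.Subset.antisymm (hminF N hNF hiN hjN) (hminG M hMG hiM hjM))
  -- pointwise formula
  have key : ∀ i ∈ S, ∀ j ∈ S,
      |(Umat F i j : ℚ) - (Umat G i j : ℚ)| =
        (if i ∈ A then (1:ℚ) else 0) * (if j ∈ B then (1:ℚ) else 0) * (C.card : ℚ)
      + (if i ∈ B then (1:ℚ) else 0) * (if j ∈ A then (1:ℚ) else 0) * (C.card : ℚ)
      + (if i ∈ B then (1:ℚ) else 0) * (if j ∈ C then (1:ℚ) else 0) * (A.card : ℚ)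
      + (if i ∈ C then (1:ℚ) else 0) * (if j ∈ B then (1:ℚ) else 0) * (A.card : ℚ) := by
    intro i hi j hj
    have ha0 : (0:ℚ) ≤ (A.card : ℚ) := by positivity
    have hc0 : (0:ℚ) ≤ (C.card : ℚ) := by positivity
    by_cases h1 : i ∈ A ∧ j ∈ B
    · obtain ⟨hiA, hjB⟩ := h1
      rw [if_pos hiA, if_pos hjB, if_neg (notBofA hiA), if_neg (notCofA hiA),
        if_neg (notAofB hjB), if_neg (notCofB hjB)]
      simp only [Umat, caF_AB hiA hjB, caG_AB hiA hjB]
      rw [abs_sub_comm, abs_of_nonneg (by push_cast; linarith)]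
      push_cast; ring
    by_cases h2 : i ∈ B ∧ j ∈ A
    · obtain ⟨hiB, hjA⟩ := h2
      have e1 : caCard F i j = A.card + B.card := (caCard_comm F i j).trans (caF_AB hjA hiB)
      have e2 : caCard G i j = A.card + B.card + C.card :=
        (caCard_comm G i j).trans (caG_AB hjA hiB)
      rw [if_pos hiB, if_pos hjA, if_neg (notAofB hiB), if_neg (notCofB hiB),
        if_neg (notBofA hjA), if_neg (notCofA hjA)]
      simp only [Umat, e1, e2]
      rw [abs_sub_comm, abs_of_nonneg (by push_cast; linarith)]
      push_cast; ring
    by_cases h3 : i ∈ B ∧ j ∈ C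
    · obtain ⟨hiB, hjC⟩ := h3
      rw [if_pos hiB, if_pos hjC, if_neg (notAofB hiB), if_neg (notCofB hiB),
        if_neg (notAofC hjC), if_neg (notBofC hjC)]
      simp only [Umat, caF_BC hiB hjC, caG_BC hiB hjC]
      rw [abs_of_nonneg (by push_cast; linarith)]
      push_cast; ring
    by_cases h4 : i ∈ C ∧ j ∈ B
    · obtain ⟨hiC, hjB⟩ := h4
      have e1 : caCard F i j = A.card + B.card + C.card :=
        (caCard_comm F i j).trans (caF_BC hjB hiC)
      have e2 : caCard G i j = B.card + C.card := (caCard_comm G i j).trans (caG_BC hjB hiC)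
      rw [if_pos hiC, if_pos hjB, if_neg (notAofC hiC), if_neg (notBofC hiC),
        if_neg (notAofB hjB), if_neg (notCofB hjB)]
      simp only [Umat, e1, e2]
      rw [abs_of_nonneg (by push_cast; linarith)]
      push_cast; ring
    · have hEq : Umat F i j = Umat G i j := by
        unfold Umat; rw [ca_eq hi hj h1 h2 h3 h4]
      have hz1 : (if i ∈ A then (1:ℚ) else 0) * (if j ∈ B then (1:ℚ) else 0) * (C.card : ℚ)
          = 0 := by
        rcases Classical.em (i ∈ A) with h | h
        · have hnb : j ∉ B := fun hj' => h1 ⟨h, hj'⟩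
          simp [hnb]
        · simp [h]
      have hz2 : (if i ∈ B then (1:ℚ) else 0) * (if j ∈ A then (1:ℚ) else 0) * (C.card : ℚ)
          = 0 := by
        rcases Classical.em (i ∈ B) with h | h
        · have hnb : j ∉ A := fun hj' => h2 ⟨h, hj'⟩
          simp [hnb]
        · simp [h]
      have hz3 : (if i ∈ B then (1:ℚ) else 0) * (if j ∈ C then (1:ℚ) else 0) * (A.card : ℚ)
          = 0 := by
        rcases Classical.em (i ∈ B) with h | h
        · have hnb : j ∉ C := fun hj' => h3 ⟨h, hj'⟩
          simp [hnb]
        · simp [h]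
      have hz4 : (if i ∈ C then (1:ℚ) else 0) * (if j ∈ B then (1:ℚ) else 0) * (A.card : ℚ)
          = 0 := by
        rcases Classical.em (i ∈ C) with h | h
        · have hnb : j ∉ B := fun hj' => h4 ⟨h, hj'⟩
          simp [hnb]
        · simp [h]
      rw [hz1, hz2, hz3, hz4, hEq, sub_self, abs_zero]
      norm_num
  -- summation
  have hsubS : ∀ u : Finset α, u ∈ F → u ⊆ S := fun u hu => (hHF.1 u hu).1
  have sumind : ∀ u : Finset α, u ⊆ S →
      (∑ i ∈ S, (if i ∈ u then (1:ℚ) else 0)) = u.card := by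
    intro u hu
    rw [Finset.sum_ite_mem, Finset.inter_eq_right.mpr hu, Finset.sum_const, nsmul_eq_mul,
      mul_one]
  have prodsum : ∀ u v : Finset α, u ⊆ S → v ⊆ S → ∀ w : ℚ,
      (∑ i ∈ S, ∑ j ∈ S, (if i ∈ u then (1:ℚ) else 0) * (if j ∈ v then (1:ℚ) else 0) * w)
        = u.card * v.card * w := by
    intro u v hu hv w
    calc (∑ i ∈ S, ∑ j ∈ S,
            (if i ∈ u then (1:ℚ) else 0) * (if j ∈ v then (1:ℚ) else 0) * w)
        = ∑ i ∈ S, (if i ∈ u then (1:ℚ) else 0) * ∑ j ∈ S,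
            ((if j ∈ v then (1:ℚ) else 0) * w) := by
          refine Finset.sum_congr rfl fun i _ => ?_
          rw [Finset.mul_sum]
          exact Finset.sum_congr rfl fun j _ => by ring
      _ = ∑ i ∈ S, (if i ∈ u then (1:ℚ) else 0) * ((v.card : ℚ) * w) := by
          refine Finset.sum_congr rfl fun i _ => ?_
          rw [← Finset.sum_mul, sumind v hv]
      _ = (∑ i ∈ S, (if i ∈ u then (1:ℚ) else 0)) * ((v.card : ℚ) * w) := by
          rw [Finset.sum_mul]
      _ = u.card * v.card * w := by rw [sumind u hu]; ring
  have habs_sum : dCC S F G = 2 * (A.card : ℚ) * B.card * C.card := by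
    unfold dCC
    rw [Finset.sum_congr rfl fun i hi => Finset.sum_congr rfl fun j hj => key i hi j hj]
    simp only [Finset.sum_add_distrib]
    rw [prodsum A B (hsubS A hAF) (hsubS B hBF), prodsum B A (hsubS B hBF) (hsubS A hAF),
      prodsum B C (hsubS B hBF) (hsubS C hCF), prodsum C B (hsubS C hCF) (hsubS B hBF)]
    ring
  -- bounds
  have haP : 1 ≤ A.card := Finset.card_pos.mpr (neF A hAF)
  have hbP : 1 ≤ B.card := Finset.card_pos.mpr (neF B hBF)
  have hcP : 1 ≤ C.card := Finset.card_pos.mpr (neF C hCF)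
  have hcard_sum_le : A.card + B.card + C.card ≤ S.card := by
    have h := Finset.card_le_card ((hHF.1 _ hABCF).1)
    rwa [cardGP] at h
  have hnat_low : 2 ≤ 2 * A.card * B.card * C.card := by
    have := Nat.mul_le_mul (Nat.mul_le_mul (Nat.mul_le_mul (le_refl 2) haP) hbP) hcP
    simpa using this
  have hnat_up : 2 * A.card * B.card * C.card ≤ 2 * S.card ^ 3 / 27 := by
    rw [Nat.le_div_iff_mul_le (by norm_num : 0 < 27)]
    have h27 := amgm A.card B.card C.card
    have hpow : (A.card + B.card + C.card) ^ 3 ≤ S.card ^ 3 :=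
      Nat.pow_le_pow_left hcard_sum_le 3
    nlinarith [h27, hpow]
  refine ⟨?_, ?_, ?_⟩
  · rw [habs_sum]; push_cast; ring
  · rw [habs_sum]; exact_mod_cast hnat_low
  · rw [habs_sum]; exact_mod_cast hnat_up

end TreeDist
end

section
/- Let S be a finite set with |S| = n ≥ 2. Then for all hierarchies 𝒜, ℬ over S (degenerate or not), the crossing dissimilarity satisfies d_CM(𝒜,ℬ) ≤ (n−2)², and there exists a pair of nondegenerate hierarchies 𝒜, ℬ over S with d_CM(𝒜,ℬ) = (n−2)². That is, the diameter of the set of hierarchies over S in the crossing dissimilarity equals (n−2)². -/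
open scoped Classical

namespace TreeDist

variable {α : Type*} [DecidableEq α]

-- ### auxiliary min with default
noncomputable def fmin {β : Type*} [LinearOrder β] (a0 : β) (t : Finset β) : β :=
  if h : t.Nonempty then t.min' h else a0

lemma fmin_mem {β : Type*} [LinearOrder β] (a0 : β) {t : Finset β} (h : t.Nonempty) :
    fmin a0 t ∈ t := by rw [fmin, dif_pos h]; exact t.min'_mem h

lemma fmin_le {β : Type*} [LinearOrder β] (a0 : β) {t : Finset β} {y : β} (hy : y ∈ t) :
    fmin a0 t ≤ y := by
  have h : t.Nonempty := ⟨y, hy⟩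
  rw [fmin, dif_pos h]; exact t.min'_le y hy

-- ### upper bound: a hierarchy has at most n-2 "crossable" clusters
lemma crossers_card_le {S : Finset α} {F : Finset (Finset α)} (hF : IsHierarchy S F)
    (hn : 2 ≤ S.card) :
    (F.filter fun I => 2 ≤ I.card ∧ I ≠ S).card ≤ S.card - 2 := by
  letI : LinearOrder α := linearOrderOfSTO WellOrderingRel
  obtain ⟨hsub, hlam, hSF, hsing⟩ := hF
  have hS0 : S.Nonempty := Finset.card_pos.mp (by omega)
  obtain ⟨a0, ha0⟩ := hS0
  have hex : ∀ I : Finset α, ∃ C : Finset α, I ∈ F → 2 ≤ I.card →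
      (C ∈ F ∧ C ⊂ I ∧ fmin a0 I ∈ C ∧
        ∀ C' ∈ F, C' ⊂ I → fmin a0 I ∈ C' → C'.card ≤ C.card) := by
    intro I
    by_cases h : I ∈ F ∧ 2 ≤ I.card
    · obtain ⟨hIF, hI2⟩ := h
      have hIne : I.Nonempty := Finset.card_pos.mp (by omega)
      have hmI : fmin a0 I ∈ I := fmin_mem a0 hIne
      have hmS : fmin a0 I ∈ S := (hsub I hIF).1 hmI
      have hsing' : ({fmin a0 I} : Finset α) ∈ F := hsing _ hmS
      have hss : ({fmin a0 I} : Finset α) ⊂ I := by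
        rw [Finset.ssubset_iff_subset_ne]
        refine ⟨Finset.singleton_subset_iff.mpr hmI, ?_⟩
        intro hcon
        rw [← hcon] at hI2
        simp at hI2
      have hTne : (F.filter fun C => C ⊂ I ∧ fmin a0 I ∈ C).Nonempty :=
        ⟨{fmin a0 I}, Finset.mem_filter.mpr ⟨hsing', hss, Finset.mem_singleton_self _⟩⟩
      obtain ⟨C, hCT, hCmax⟩ :=
        Finset.exists_max_image (F.filter fun C => C ⊂ I ∧ fmin a0 I ∈ C) Finset.card hTne
      rw [Finset.mem_filter] at hCT
      refine ⟨C, fun _ _ => ⟨hCT.1, hCT.2.1, hCT.2.2, ?_⟩⟩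
      intro C' h1 h2 h3
      exact hCmax C' (Finset.mem_filter.mpr ⟨h1, h2, h3⟩)
    · exact ⟨∅, fun h1 h2 => absurd ⟨h1, h2⟩ h⟩
  choose C hC using hex
  set f : Finset α → α := fun I => fmin a0 (I \ C I) with hf
  have hCp : ∀ I ∈ F.filter (fun I => 2 ≤ I.card), C I ∈ F ∧ C I ⊂ I ∧ fmin a0 I ∈ C I ∧
      ∀ C' ∈ F, C' ⊂ I → fmin a0 I ∈ C' → C'.card ≤ (C I).card := by
    intro I hI
    rw [Finset.mem_filter] at hI
    exact hC I hI.1 hI.2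
  have hfI : ∀ I ∈ F.filter (fun I => 2 ≤ I.card), f I ∈ I \ C I := by
    intro I hI
    obtain ⟨-, hss, -, -⟩ := hCp I hI
    obtain ⟨x, hxI, hxC⟩ := Finset.exists_of_ssubset hss
    exact fmin_mem a0 ⟨x, Finset.mem_sdiff.mpr ⟨hxI, hxC⟩⟩
  have key : ∀ I ∈ F.filter (fun I => 2 ≤ I.card), ∀ J ∈ F.filter (fun I => 2 ≤ I.card),
      I ⊂ J → f I ≠ f J := by
    intro I hI J hJ hIJ heq
    obtain ⟨hJF, hCJJ, hmJ, hmax⟩ := hCp J hJ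
    obtain ⟨hIF2, hI2⟩ := Finset.mem_filter.mp hI
    have hIne : I.Nonempty := Finset.card_pos.mp (by omega)
    have hfImem : f I ∈ I \ C I := hfI I hI
    have hfJmem : f J ∈ J \ C J := hfI J hJ
    obtain ⟨-, -, hmICI, -⟩ := hCp I hI
    have hnotCJ : f I ∉ C J → f I ∈ C J → False := fun a b => a b
    rcases hlam I hIF2 (C J) hJF with hdis | hsub' | hsup
    · -- I and C J disjoint
      have hxI : f I ∈ I := (Finset.mem_sdiff.mp hfImem).1
      have hmImem : fmin a0 I ∈ I := fmin_mem a0 hIne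
      have hmIJC : fmin a0 I ∈ J \ C J := by
        refine Finset.mem_sdiff.mpr ⟨hIJ.subset hmImem, fun hmem => ?_⟩
        have hmem2 : fmin a0 I ∈ I ∩ C J := Finset.mem_inter.mpr ⟨hmImem, hmem⟩
        rw [hdis] at hmem2
        exact absurd hmem2 (Finset.notMem_empty _)
      have h1 : f J ≤ fmin a0 I := fmin_le a0 hmIJC
      have h2 : fmin a0 I ≤ f I := fmin_le a0 hxI
      have h3 : fmin a0 I = f I := le_antisymm h2 (heq ▸ h1)
      exact (Finset.mem_sdiff.mp hfImem).2 (h3 ▸ hmICI)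
    · have h4 : f I ∈ C J := hsub' (Finset.mem_sdiff.mp hfImem).1
      exact (Finset.mem_sdiff.mp hfJmem).2 (heq ▸ h4)
    · by_cases he : I = C J
      · have h4 : f I ∈ C J := he ▸ (Finset.mem_sdiff.mp hfImem).1
        exact (Finset.mem_sdiff.mp hfJmem).2 (heq ▸ h4)
      · have hss : C J ⊂ I := Finset.ssubset_iff_subset_ne.mpr ⟨hsup, fun hcon => he hcon.symm⟩
        have h5 : I.card ≤ (C J).card := hmax I hIF2 hIJ (hsup hmJ)
        have h6 : (C J).card < I.card := Finset.card_lt_card hss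
        omega
  have hinj : Set.InjOn f ↑(F.filter (fun I => 2 ≤ I.card)) := by
    intro I hI J hJ heq
    rw [Finset.mem_coe] at hI hJ
    by_contra hne'
    obtain ⟨hIF2, -⟩ := Finset.mem_filter.mp hI
    obtain ⟨hJF2, -⟩ := Finset.mem_filter.mp hJ
    rcases hlam I hIF2 J hJF2 with hdis | h1 | h2
    · have hxI : f I ∈ I := (Finset.mem_sdiff.mp (hfI I hI)).1
      have hxJ : f J ∈ J := (Finset.mem_sdiff.mp (hfI J hJ)).1
      have : f I ∈ I ∩ J := Finset.mem_inter.mpr ⟨hxI, heq ▸ hxJ⟩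
      rw [hdis] at this
      exact absurd this (Finset.notMem_empty _)
    · exact key I hI J hJ (Finset.ssubset_iff_subset_ne.mpr ⟨h1, hne'⟩) heq
    · exact key J hJ I hI (Finset.ssubset_iff_subset_ne.mpr ⟨h2, fun hcon => hne' hcon.symm⟩) heq.symm
  have hmaps : ∀ I ∈ F.filter (fun I => 2 ≤ I.card), f I ∈ S.erase (fmin a0 S) := by
    intro I hI
    obtain ⟨hIF2, hI2⟩ := Finset.mem_filter.mp hI
    have hIne : I.Nonempty := Finset.card_pos.mp (by omega)
    have hfImem : f I ∈ I \ C I := hfI I hI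
    have hxI : f I ∈ I := (Finset.mem_sdiff.mp hfImem).1
    have hxS : f I ∈ S := (hsub I hIF2).1 hxI
    refine Finset.mem_erase.mpr ⟨fun hxe => ?_, hxS⟩
    by_cases hmem : fmin a0 S ∈ I
    · have h1 : fmin a0 I ≤ fmin a0 S := fmin_le a0 hmem
      have h2 : fmin a0 S ≤ fmin a0 I := fmin_le a0 ((hsub I hIF2).1 (fmin_mem a0 hIne))
      have heqm : fmin a0 S = fmin a0 I := le_antisymm h2 h1
      obtain ⟨-, -, hmICI, -⟩ := hCp I hI
      exact (Finset.mem_sdiff.mp hfImem).2 (hxe ▸ heqm ▸ hmICI)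
    · exact hmem (hxe ▸ hxI)
  have hbigcard : (F.filter (fun I => 2 ≤ I.card)).card ≤ S.card - 1 := by
    have h := Finset.card_le_card_of_injOn f hmaps hinj
    rwa [Finset.card_erase_of_mem (fmin_mem a0 ⟨a0, ha0⟩)] at h
  have hSbig : S ∈ F.filter (fun I => 2 ≤ I.card) := Finset.mem_filter.mpr ⟨hSF, hn⟩
  have heq2 : (F.filter fun I => 2 ≤ I.card ∧ I ≠ S) =
      (F.filter (fun I => 2 ≤ I.card)).erase S := by
    ext A
    simp only [Finset.mem_filter, Finset.mem_erase]
    tauto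
  rw [heq2, Finset.card_erase_of_mem hSbig]
  omega

lemma card_two_of_cross {S : Finset α} {F G : Finset (Finset α)}
    (hF : IsHierarchy S F) (hG : IsHierarchy S G) {I J : Finset α}
    (hI : I ∈ F) (hJ : J ∈ G) (h : ¬ Compatible I J) :
    (2 ≤ I.card ∧ I ≠ S) ∧ (2 ≤ J.card ∧ J ≠ S) := by
  have hIS := hF.1 I hI
  have hJS := hG.1 J hJ
  refine ⟨⟨?_, ?_⟩, ?_, ?_⟩
  · by_contra hlt
    push_neg at hlt
    have hc1 : I.card = 1 := by have := Finset.card_pos.mpr hIS.2; omega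
    obtain ⟨x, hx⟩ := Finset.card_eq_one.mp hc1
    subst hx
    by_cases hxJ : x ∈ J
    · exact h (Or.inr (Or.inl (Finset.singleton_subset_iff.mpr hxJ)))
    · exact h (Or.inl (Finset.singleton_inter_of_notMem hxJ))
  · rintro rfl; exact h (Or.inr (Or.inr hJS.1))
  · by_contra hlt
    push_neg at hlt
    have hc1 : J.card = 1 := by have := Finset.card_pos.mpr hJS.2; omega
    obtain ⟨x, hx⟩ := Finset.card_eq_one.mp hc1
    subst hx
    by_cases hxI : x ∈ I
    · exact h (Or.inr (Or.inr (Finset.singleton_subset_iff.mpr hxI)))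
    · exact h (Or.inl (Finset.inter_singleton_of_notMem hxI))
  · rintro rfl; exact h (Or.inr (Or.inl hIS.1))

lemma dCM_le_of_hierarchy {S : Finset α} (hn : 2 ≤ S.card)
    {F G : Finset (Finset α)} (hF : IsHierarchy S F) (hG : IsHierarchy S G) :
    dCM F G ≤ (S.card - 2) ^ 2 := by
  have hsubset : (F ×ˢ G).filter (fun p => ¬ Compatible p.1 p.2) ⊆
      (F.filter fun I => 2 ≤ I.card ∧ I ≠ S) ×ˢ (G.filter fun I => 2 ≤ I.card ∧ I ≠ S) := by
    intro p hp
    rw [Finset.mem_filter, Finset.mem_product] at hp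
    obtain ⟨⟨h1, h2⟩, h3⟩ := hp
    obtain ⟨hA, hB⟩ := card_two_of_cross hF hG h1 h2 h3
    rw [Finset.mem_product, Finset.mem_filter, Finset.mem_filter]
    exact ⟨⟨h1, hA⟩, ⟨h2, hB⟩⟩
  calc dCM F G ≤ ((F.filter fun I => 2 ≤ I.card ∧ I ≠ S) ×ˢ
        (G.filter fun I => 2 ≤ I.card ∧ I ≠ S)).card := Finset.card_le_card hsubset
    _ = (F.filter fun I => 2 ≤ I.card ∧ I ≠ S).card *
        (G.filter fun I => 2 ≤ I.card ∧ I ≠ S).card := Finset.card_product _ _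
    _ ≤ (S.card - 2) * (S.card - 2) :=
        Nat.mul_le_mul (crossers_card_le hF hn) (crossers_card_le hG hn)
    _ = (S.card - 2) ^ 2 := (sq _).symm

-- caterpillar machinery
lemma compat_singleton_left (x : α) (B : Finset α) : Compatible ({x} : Finset α) B := by
  by_cases hx : x ∈ B
  · exact Or.inr (Or.inl (Finset.singleton_subset_iff.mpr hx))
  · exact Or.inl (Finset.singleton_inter_of_notMem hx)

lemma compat_singleton_right (x : α) (A : Finset α) : Compatible A ({x} : Finset α) := by
  by_cases hx : x ∈ A
  · exact Or.inr (Or.inr (Finset.singleton_subset_iff.mpr hx))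
  · exact Or.inl (Finset.inter_singleton_of_notMem hx)

noncomputable def pre {n : ℕ} (w : Fin n → α) (k : ℕ) : Finset α :=
  (Finset.univ.filter fun i : Fin n => (i : ℕ) < k).image w

lemma mem_pre {n : ℕ} {w : Fin n → α} {k : ℕ} {x : α} :
    x ∈ pre w k ↔ ∃ i : Fin n, (i : ℕ) < k ∧ w i = x := by
  simp [pre]

lemma pre_mono {n : ℕ} (w : Fin n → α) {k l : ℕ} (h : k ≤ l) : pre w k ⊆ pre w l := by
  intro x hx
  obtain ⟨i, hi, rfl⟩ := mem_pre.mp hx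
  exact mem_pre.mpr ⟨i, lt_of_lt_of_le hi h, rfl⟩

lemma card_pre {n : ℕ} {w : Fin n → α} (hinj : Function.Injective w) {k : ℕ} (hk : k ≤ n) :
    (pre w k).card = k := by
  rw [pre, Finset.card_image_of_injective _ hinj]
  have h1 : ((Finset.univ.filter fun i : Fin n => (i : ℕ) < k).image Fin.val) =
      Finset.range k := by
    ext m
    simp only [Finset.mem_image, Finset.mem_filter, Finset.mem_univ, true_and,
      Finset.mem_range]
    constructor
    · rintro ⟨i, hi, rfl⟩; exact hi
    · intro hm; exact ⟨⟨m, lt_of_lt_of_le hm hk⟩, hm, rfl⟩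
  rw [← Finset.card_image_of_injective _ Fin.val_injective, h1, Finset.card_range]

lemma pre_subset {n : ℕ} {S : Finset α} {w : Fin n → α} (hw : ∀ i, w i ∈ S) (k : ℕ) :
    pre w k ⊆ S := by
  intro x hx
  obtain ⟨i, -, rfl⟩ := mem_pre.mp hx
  exact hw i

lemma pre_full {S : Finset α} {w : Fin S.card → α} (hw : ∀ i, w i ∈ S)
    (hinj : Function.Injective w) : pre w S.card = S :=
  Finset.eq_of_subset_of_card_le (pre_subset hw _) (le_of_eq (card_pre hinj le_rfl).symm)

lemma pre_one {n : ℕ} {w : Fin n → α} (hn : 0 < n) :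
    pre w 1 = {w ⟨0, hn⟩} := by
  ext x
  rw [mem_pre, Finset.mem_singleton]
  constructor
  · rintro ⟨i, hi, rfl⟩
    have hi0 : i = ⟨0, hn⟩ := by
      apply Fin.ext
      simp only [Fin.val_mk]
      omega
    rw [hi0]
  · rintro rfl; exact ⟨⟨0, hn⟩, Nat.zero_lt_one, rfl⟩

noncomputable def cat (S : Finset α) (w : Fin S.card → α) : Finset (Finset α) :=
  ((Finset.range S.card).image fun k => pre w (k + 1)) ∪ S.image fun x => ({x} : Finset α)

lemma pre_mem_cat {S : Finset α} (w : Fin S.card → α) {k : ℕ} (h1 : 1 ≤ k)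
    (h2 : k ≤ S.card) : pre w k ∈ cat S w := by
  refine Finset.mem_union_left _ (Finset.mem_image.mpr ⟨k - 1, Finset.mem_range.mpr (by omega), ?_⟩)
  congr 1
  omega

lemma cat_hierarchy {S : Finset α} {w : Fin S.card → α} (hw : ∀ i, w i ∈ S)
    (hinj : Function.Injective w) (hn : 1 ≤ S.card) : IsHierarchy S (cat S w) := by
  refine ⟨?_, ?_, ?_, ?_⟩
  · intro A hA
    rcases Finset.mem_union.mp hA with h | h
    · obtain ⟨k, hk, rfl⟩ := Finset.mem_image.mp h
      refine ⟨pre_subset hw _, ⟨w ⟨0, by omega⟩, mem_pre.mpr ⟨⟨0, by omega⟩, Nat.succ_pos k, rfl⟩⟩⟩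
    · obtain ⟨x, hx, rfl⟩ := Finset.mem_image.mp h
      exact ⟨Finset.singleton_subset_iff.mpr hx, Finset.singleton_nonempty x⟩
  · intro A hA B hB
    rcases Finset.mem_union.mp hA with h | h
    · rcases Finset.mem_union.mp hB with h' | h'
      · obtain ⟨k, hk, rfl⟩ := Finset.mem_image.mp h
        obtain ⟨l, hl, rfl⟩ := Finset.mem_image.mp h'
        rcases le_total k l with hle | hle
        · exact Or.inr (Or.inl (pre_mono w (by omega)))
        · exact Or.inr (Or.inr (pre_mono w (by omega)))
      · obtain ⟨x, hx, rfl⟩ := Finset.mem_image.mp h'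
        exact compat_singleton_right x _
    · obtain ⟨x, hx, rfl⟩ := Finset.mem_image.mp h
      exact compat_singleton_left x _
  · have := pre_mem_cat w hn le_rfl
    rwa [pre_full hw hinj] at this
  · intro i hi
    exact Finset.mem_union_right _ (Finset.mem_image.mpr ⟨i, hi, rfl⟩)

lemma cat_card {S : Finset α} {w : Fin S.card → α} (hw : ∀ i, w i ∈ S)
    (hinj : Function.Injective w) (hn : 1 ≤ S.card) :
    (cat S w).card = 2 * S.card - 1 := by
  have hPcard : ((Finset.range S.card).image fun k => pre w (k + 1)).card = S.card := by
    rw [Finset.card_image_of_injOn, Finset.card_range]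
    intro k hk l hl heq
    rw [Finset.mem_coe, Finset.mem_range] at hk hl
    have heq' : pre w (k+1) = pre w (l+1) := heq
    have h1 : (pre w (k+1)).card = k + 1 := card_pre hinj (by omega)
    have h2 : (pre w (l+1)).card = l + 1 := card_pre hinj (by omega)
    rw [heq'] at h1
    omega
  have hQcard : (S.image fun x => ({x} : Finset α)).card = S.card :=
    Finset.card_image_of_injective _ Finset.singleton_injective
  have hPQ : ((Finset.range S.card).image fun k => pre w (k + 1)) ∩
      (S.image fun x => ({x} : Finset α)) = {pre w 1} := by
    ext A
    rw [Finset.mem_inter, Finset.mem_singleton]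
    constructor
    · rintro ⟨h1, h2⟩
      obtain ⟨k, hk, rfl⟩ := Finset.mem_image.mp h1
      obtain ⟨x, hx, hxA⟩ := Finset.mem_image.mp h2
      rw [Finset.mem_range] at hk
      have hc1 : (pre w (k+1)).card = k + 1 := card_pre hinj (by omega)
      rw [← hxA] at hc1
      rw [Finset.card_singleton] at hc1
      have : k = 0 := by omega
      rw [this]
    · rintro rfl
      constructor
      · exact Finset.mem_image.mpr ⟨0, Finset.mem_range.mpr (by omega), rfl⟩
      · refine Finset.mem_image.mpr ⟨w ⟨0, by omega⟩, hw _, (pre_one (by omega)).symm⟩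
  have := Finset.card_union_add_card_inter
    ((Finset.range S.card).image fun k => pre w (k + 1)) (S.image fun x => ({x} : Finset α))
  rw [hPQ, hPcard, hQcard, Finset.card_singleton] at this
  unfold cat
  omega


-- the two orderings used for the extremal caterpillars
noncomputable def catu (S : Finset α) : Fin S.card → α :=
  fun i => ((S.equivFin.symm i : S) : α)

noncomputable def catv (S : Finset α) : Fin S.card → α :=
  fun i => if h : (i : ℕ) = 0 then catu S i
    else catu S ⟨S.card - (i : ℕ), by have := i.isLt; omega⟩

lemma catu_mem (S : Finset α) (i : Fin S.card) : catu S i ∈ S := (S.equivFin.symm i).2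

lemma catu_inj (S : Finset α) : Function.Injective (catu S) := fun i j h =>
  S.equivFin.symm.injective (Subtype.coe_injective h)

lemma catv_mem (S : Finset α) (i : Fin S.card) : catv S i ∈ S := by
  rw [catv]
  split_ifs <;> exact catu_mem S _

lemma catv_zero (S : Finset α) (h : 0 < S.card) :
    catv S ⟨0, h⟩ = catu S ⟨0, h⟩ := by rw [catv]; exact dif_pos rfl

lemma catv_eq (S : Finset α) (i : Fin S.card) (h : (i : ℕ) ≠ 0) :
    catv S i = catu S ⟨S.card - (i : ℕ), by have := i.isLt; omega⟩ := by
  rw [catv]; exact dif_neg h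

lemma catv_inj (S : Finset α) : Function.Injective (catv S) := by
  intro i j h
  by_cases h1 : (i : ℕ) = 0 <;> by_cases h2 : (j : ℕ) = 0
  · exact Fin.ext (by omega)
  · rw [catv_eq S j h2] at h
    rw [show catv S i = catu S i from by rw [catv]; exact dif_pos h1] at h
    have hval := congrArg Fin.val (catu_inj S h)
    simp only [Fin.val_mk] at hval
    have := j.isLt
    omega
  · rw [catv_eq S i h1] at h
    rw [show catv S j = catu S j from by rw [catv]; exact dif_pos h2] at h
    have hval := congrArg Fin.val (catu_inj S h)
    simp only [Fin.val_mk] at hval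
    have := i.isLt
    omega
  · rw [catv_eq S i h1, catv_eq S j h2] at h
    have hval := congrArg Fin.val (catu_inj S h)
    simp only [Fin.val_mk] at hval
    have := i.isLt
    have := j.isLt
    exact Fin.ext (by omega)

theorem dCM_diameter' (S : Finset α) (hn : 2 ≤ S.card) :
    (∀ F G : Finset (Finset α), IsHierarchy S F → IsHierarchy S G →
      dCM F G ≤ (S.card - 2) ^ 2) ∧
    (∃ F G : Finset (Finset α), Nondeg S F ∧ Nondeg S G ∧
      dCM F G = (S.card - 2) ^ 2) := by
  constructor
  · intro F G hF hG
    exact dCM_le_of_hierarchy hn hF hG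
  · have hnpos : 0 < S.card := by omega
    have hu_mem : ∀ i, catu S i ∈ S := catu_mem S
    have hu_inj := catu_inj S
    have hv_mem : ∀ i, catv S i ∈ S := catv_mem S
    have hv_inj := catv_inj S
    have hFh : IsHierarchy S (cat S (catu S)) := cat_hierarchy hu_mem hu_inj (by omega)
    have hGh : IsHierarchy S (cat S (catv S)) := cat_hierarchy hv_mem hv_inj (by omega)
    refine ⟨cat S (catu S), cat S (catv S),
      ⟨hFh, cat_card hu_mem hu_inj (by omega)⟩,
      ⟨hGh, cat_card hv_mem hv_inj (by omega)⟩, ?_⟩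
    refine le_antisymm (dCM_le_of_hierarchy hn hFh hGh) ?_
    have hcount : ((Finset.range (S.card - 2)) ×ˢ (Finset.range (S.card - 2))).card
        = (S.card - 2) ^ 2 := by
      rw [Finset.card_product, Finset.card_range]
      exact (pow_two _).symm
    rw [← hcount]
    unfold dCM
    apply Finset.card_le_card_of_injOn
      (fun p : ℕ × ℕ => (pre (catu S) (p.1 + 2), pre (catv S) (p.2 + 2)))
    · intro p hp
      rw [Finset.mem_coe, Finset.mem_product, Finset.mem_range, Finset.mem_range] at hp
      obtain ⟨hp1, hp2⟩ := hp
      rw [Finset.mem_coe]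
      refine Finset.mem_filter.mpr ⟨Finset.mem_product.mpr
        ⟨pre_mem_cat _ (by omega) (by omega), pre_mem_cat _ (by omega) (by omega)⟩, ?_⟩
      intro hcomp
      have h0u : catu S ⟨0, hnpos⟩ ∈ pre (catu S) (p.1 + 2) :=
        mem_pre.mpr ⟨⟨0, hnpos⟩, Nat.succ_pos _, rfl⟩
      have h0v : catu S ⟨0, hnpos⟩ ∈ pre (catv S) (p.2 + 2) :=
        mem_pre.mpr ⟨⟨0, hnpos⟩, Nat.succ_pos _, catv_zero S hnpos⟩
      rcases hcomp with hdis | hsub | hsup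
      · have hmem : catu S ⟨0, hnpos⟩ ∈ pre (catu S) (p.1 + 2) ∩ pre (catv S) (p.2 + 2) :=
          Finset.mem_inter.mpr ⟨h0u, h0v⟩
        rw [hdis] at hmem
        exact absurd hmem (Finset.notMem_empty _)
      · have h1u : catu S ⟨1, by omega⟩ ∈ pre (catu S) (p.1 + 2) :=
          mem_pre.mpr ⟨⟨1, by omega⟩, show (1 : ℕ) < p.1 + 2 by omega, rfl⟩
        obtain ⟨i, hi, hvi⟩ := mem_pre.mp (hsub h1u)
        by_cases hz : (i : ℕ) = 0
        · rw [show catv S i = catu S i from by rw [catv]; exact dif_pos hz] at hvi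
          have hval := congrArg Fin.val (hu_inj hvi)
          simp only [Fin.val_mk] at hval
          omega
        · rw [catv_eq S i hz] at hvi
          have hval := congrArg Fin.val (hu_inj hvi)
          simp only [Fin.val_mk] at hval
          have := i.isLt
          omega
      · have h1v : catv S ⟨1, by omega⟩ ∈ pre (catv S) (p.2 + 2) :=
          mem_pre.mpr ⟨⟨1, by omega⟩, show (1 : ℕ) < p.2 + 2 by omega, rfl⟩
        obtain ⟨i, hi, hui⟩ := mem_pre.mp (hsup h1v)
        rw [catv_eq S ⟨1, by omega⟩ one_ne_zero] at hui
        have hval := congrArg Fin.val (hu_inj hui)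
        simp only [Fin.val_mk] at hval
        omega
    · intro p hp q hq heq
      rw [Finset.mem_coe, Finset.mem_product, Finset.mem_range, Finset.mem_range] at hp hq
      have h1 : pre (catu S) (p.1 + 2) = pre (catu S) (q.1 + 2) := congrArg Prod.fst heq
      have h2 : pre (catv S) (p.2 + 2) = pre (catv S) (q.2 + 2) := congrArg Prod.snd heq
      have c1 : (pre (catu S) (p.1 + 2)).card = p.1 + 2 := card_pre hu_inj (by omega)
      have c1' : (pre (catu S) (q.1 + 2)).card = q.1 + 2 := card_pre hu_inj (by omega)
      have c2 : (pre (catv S) (p.2 + 2)).card = p.2 + 2 := card_pre hv_inj (by omega)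
      have c2' : (pre (catv S) (q.2 + 2)).card = q.2 + 2 := card_pre hv_inj (by omega)
      rw [h1] at c1
      rw [h2] at c2
      have e1 : p.1 = q.1 := by omega
      have e2 : p.2 = q.2 := by omega
      exact Prod.ext e1 e2

theorem dCM_diameter (S : Finset α) (hn : 2 ≤ S.card) :
    (∀ F G : Finset (Finset α), IsHierarchy S F → IsHierarchy S G →
      dCM F G ≤ (S.card - 2) ^ 2) ∧
    (∃ F G : Finset (Finset α), Nondeg S F ∧ Nondeg S G ∧
      dCM F G = (S.card - 2) ^ 2) := by
  exact dCM_diameter' S hn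

end TreeDist
end
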